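/- arXiv:1402.4424 — 4 statements merged into one kernel-verified Lean document; each statement's English description precedes it below -/
import Mathlib

section
/- Let b be a prime, n,d ≥ 1 and s ≥ n integers, and let P be the digital net over 𝔽_b generated by matrices C₁,…,C_d ∈ 𝔽_b^{s×n}. Then for every x ∈ [0,1)^d the discrepancy function satisfies D_P(x) = Σ_{t ∈ 𝒟(C₁,…,C_d) \ {(0,…,0)}} χ̂_{[0,x)}(t), where the sum converges in the sense that lim_{M→∞} Σ_{t ∈ 𝒟(C₁,…,C_d) \ {(0,…,0)}, t_i < b^M for all i} χ̂_{[0,x)}(t) = D_P(x). -/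
open MeasureTheory Finset
open scoped BigOperators Classical

noncomputable section

namespace DigitalNets

/-- The `b`-adic digit vector `ν̄ = (ν₀,…,ν_{n−1})ᵀ ∈ 𝔽_b^n` of `ν ∈ ℕ`. -/
def digitVec (b n : ℕ) (ν : ℕ) : Fin n → ZMod b :=
  fun k => ((ν / b ^ (k : ℕ)) % b : ℕ)

/-- The point of the digital net with index `ν`:
`x_{i,ν} = Σ_{k=1}^s x_{i,ν,k} b^{−k}` where `(x_{i,ν,1},…,x_{i,ν,s})ᵀ = C_i ν̄`. -/
def digitalPoint {b n s d : ℕ} (Cm : Fin d → Matrix (Fin s) (Fin n) (ZMod b)) (ν : ℕ) :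
    Fin d → ℝ :=
  fun i => ∑ k : Fin s,
    (((Matrix.mulVec (Cm i) (digitVec b n ν)) k).val : ℝ) * ((b : ℝ) ^ ((k : ℕ) + 1))⁻¹

/-- The digital net over `𝔽_b` generated by `C₁,…,C_d`, as the indexed family (multiset)
of its `b^n` points `x₀,…,x_{b^n−1}`. -/
def digitalNet {b n s d : ℕ} (Cm : Fin d → Matrix (Fin s) (Fin n) (ZMod b)) :
    Fin (b ^ n) → Fin d → ℝ :=
  fun ν => digitalPoint Cm (ν : ℕ)

/-- `C₁,…,C_d` generate an order `σ` digital `(v,n,d)`-net over `𝔽_b`: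
for all `η₁,…,η_d ∈ ℕ₀` and all `1 ≤ λ_{i,1} < … < λ_{i,η_i} ≤ s` with
`Σᵢ (λ_{i,1}+…+λ_{i,min(η_i,σ)}) ≤ σn − v`, the rows `c_{i,λ_{i,k}}` are linearly
independent over `𝔽_b`.  (Here `lam i k : Fin s` encodes the index `λ_{i,k+1} = lam i k + 1`.) -/
def IsOrderDigitalNet (b σ n d s v : ℕ) (Cm : Fin d → Matrix (Fin s) (Fin n) (ZMod b)) : Prop :=
  ∀ (η : Fin d → ℕ) (lam : (i : Fin d) → Fin (η i) → Fin s),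
    (∀ i, StrictMono (lam i)) →
    (∑ i, ∑ k : Fin (η i), if (k : ℕ) < σ then (lam i k : ℕ) + 1 else 0) ≤ σ * n - v →
    LinearIndependent (ZMod b)
      (fun p : (i : Fin d) × Fin (η i) => fun jc : Fin n => Cm p.1 (lam p.1 p.2) jc)

/-- The unit cube `[0,1)^d`. -/
def unitCube (d : ℕ) : Set (Fin d → ℝ) := Set.univ.pi fun _ => Set.Ico (0 : ℝ) 1

/-- The discrepancy function `D_P(x) = (1/N) Σ_{z∈P} χ_{[0,x)}(z) − x₁⋯x_d` of a
point multiset `P` given as an indexed family of `N` points. -/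
def discrepancy (d N : ℕ) (P : Fin N → Fin d → ℝ) (x : Fin d → ℝ) : ℝ :=
  ((Finset.univ.filter fun ν : Fin N =>
      P ν ∈ Set.univ.pi fun i => Set.Ico (0 : ℝ) (x i)).card : ℝ) / (N : ℝ) - ∏ i, x i

/-- One-dimensional `b`-adic Haar function `h_{j,m,l}` (level `j ∈ ℕ₋₁`, encoded as `j : ℤ`). -/
def haar1 (b : ℕ) (j : ℤ) (m l : ℕ) (x : ℝ) : ℂ :=
  if j = -1 then (if x ∈ Set.Ico (0 : ℝ) 1 then 1 else 0)
  else if x ∈ Set.Ico ((b : ℝ) ^ (-j) * (m : ℝ)) ((b : ℝ) ^ (-j) * ((m : ℝ) + 1)) then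
    Complex.exp (2 * (Real.pi : ℂ) * Complex.I * (l : ℂ) *
      ((⌊(b : ℝ) ^ (j + 1) * x⌋ % (b : ℤ) : ℤ) : ℂ) / (b : ℂ))
  else 0

/-- `d`-dimensional `b`-adic Haar function `h_{j,m,l}(x) = ∏ᵢ h_{jᵢ,mᵢ,lᵢ}(xᵢ)`. -/
def haar (b d : ℕ) (j : Fin d → ℤ) (m l : Fin d → ℕ) (x : Fin d → ℝ) : ℂ :=
  ∏ i, haar1 b (j i) (m i) (l i) (x i)

/-- Encoding of levels: `jr : Fin d → ℕ` encodes `j ∈ ℕ₋₁^d` via `j i = jr i − 1`. -/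
def level {d : ℕ} (jr : Fin d → ℕ) : Fin d → ℤ := fun i => (jr i : ℤ) - 1

/-- `|j|₊ = Σᵢ max(jᵢ,0)` for the level encoded by `jr`. -/
def levelSum {d : ℕ} (jr : Fin d → ℕ) : ℕ := ∑ i, (jr i - 1)

/-- `l ∈ 𝔹_j`: `l i = 1` if `j i = −1` (i.e. `jr i = 0`), and `1 ≤ l i ≤ b−1` otherwise. -/
def validL (b : ℕ) {d : ℕ} (jr : Fin d → ℕ) (l : Fin d → ℕ) : Prop :=
  ∀ i, if jr i = 0 then l i = 1 else 1 ≤ l i ∧ l i < b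

/-- Inner product `⟨f,g⟩ = ∫_{[0,1)^d} f(x) conj(g(x)) dx`. -/
def innerCube (d : ℕ) (f g : (Fin d → ℝ) → ℂ) : ℂ :=
  ∫ x in unitCube d, f x * (starRingEnd ℂ) (g x)

/-- One-dimensional `b`-adic interval `I_{j,m}` (level `j ∈ ℕ₋₁` encoded as `j : ℤ`). -/
def badicInterval1 (b : ℕ) (j : ℤ) (m : ℕ) : Set ℝ :=
  if j = -1 then Set.Ico 0 1
  else Set.Ico ((b : ℝ) ^ (-j) * (m : ℝ)) ((b : ℝ) ^ (-j) * ((m : ℝ) + 1))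

/-- `d`-dimensional `b`-adic interval `I_{j,m} = I_{j₁,m₁}×…×I_{j_d,m_d}`. -/
def badicInterval (b : ℕ) {d : ℕ} (j : Fin d → ℤ) (m : Fin d → ℕ) : Set (Fin d → ℝ) :=
  Set.univ.pi fun i => badicInterval1 b (j i) (m i)

/-- The `a`-th `b`-adic digit of `x ∈ [0,1)` (`a = 0` gives the first digit `x₁`),
for the expansion not ending in an infinite string of digits `b−1`. -/
def xdigit (b : ℕ) (a : ℕ) (x : ℝ) : ℤ := ⌊(b : ℝ) ^ (a + 1) * x⌋ % (b : ℤ)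

/-- One-dimensional `b`-adic Walsh function `wal_α`. -/
def walsh1 (b : ℕ) (α : ℕ) (x : ℝ) : ℂ :=
  Complex.exp (2 * (Real.pi : ℂ) * Complex.I / (b : ℂ) *
    ∑ a ∈ Finset.range (α + 1), (((α / b ^ a) % b : ℕ) : ℂ) * ((xdigit b a x : ℤ) : ℂ))

/-- `d`-dimensional Walsh function `wal_t(x) = ∏ᵢ wal_{tᵢ}(xᵢ)`. -/
def walsh (b d : ℕ) (t : Fin d → ℕ) (x : Fin d → ℝ) : ℂ := ∏ i, walsh1 b (t i) (x i)

/-- The vector `t̄ = (τ₀,…,τ_{s−1})ᵀ ∈ 𝔽_b^s` of the first `s` `b`-adic digits of `t`. -/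
def dualDigitVec (b s : ℕ) (t : ℕ) : Fin s → ZMod b :=
  fun k => ((t / b ^ (k : ℕ)) % b : ℕ)

/-- The dual net: `t ∈ 𝒟(C₁,…,C_d)` iff `C₁ᵀt̄₁ + … + C_dᵀt̄_d = 0 ∈ 𝔽_b^n`. -/
def InDual {b n s d : ℕ} (Cm : Fin d → Matrix (Fin s) (Fin n) (ZMod b)) (t : Fin d → ℕ) : Prop :=
  ∑ i, Matrix.mulVec (Matrix.transpose (Cm i)) (dualDigitVec b s (t i)) = 0

/-- The positions `0 < a₁ < … < a_ν` of the nonzero `b`-adic digits of `α`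
(`a` is a position iff the digit of `b^{a−1}` in `α` is nonzero). -/
def digitPositions (b α : ℕ) : Finset ℕ :=
  (Finset.range (α + 1)).filter fun a => 1 ≤ a ∧ (α / b ^ (a - 1)) % b ≠ 0

/-- The weight `ρ_σ(α) = a_ν + a_{ν−1} + … + a_{max(ν−σ+1,1)}`: the sum of the `σ`
largest positions of nonzero `b`-adic digits of `α`; `ρ_σ(0) = 0`. -/
def weight (b σ α : ℕ) : ℕ :=
  ∑ a ∈ digitPositions b α,
    if ((digitPositions b α).filter fun a' => a < a').card < σ then a else 0

/-- `ρ_σ(t) = ρ_σ(t₁) + … + ρ_σ(t_d)` for `t ∈ ℕ₀^d`. -/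
def weightVec (b σ : ℕ) {d : ℕ} (t : Fin d → ℕ) : ℕ := ∑ i, weight b σ (t i)

/-- `t′`: the number `t` with its leading `b`-adic digit removed; `0′ = 0`. -/
def trunc (b t : ℕ) : ℕ := t % b ^ (weight b 1 t - 1)

/-- Walsh coefficient `χ̂_{[0,x)}(η) = ∫₀^x conj(wal_η(y)) dy` of the indicator of `[0,x)`. -/
def walshCoeff (b : ℕ) (η : ℕ) (x : ℝ) : ℂ :=
  ∫ y in Set.Ico (0 : ℝ) x, (starRingEnd ℂ) (walsh1 b η y)

end DigitalNets
namespace DWS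
open DigitalNets MeasureTheory


def phi (b : ℕ) (z : ZMod b) : ℂ :=
  Complex.exp (2 * Real.pi * Complex.I * (z.val : ℂ) / b)

lemma natCast_zmod_val {b : ℕ} [NeZero b] (z : ZMod b) : ((z.val : ℕ) : ZMod b) = z := by
  rw [ZMod.natCast_val, ZMod.cast_id]

lemma phi_intCast {b : ℕ} [NeZero b] (m : ℤ) :
    Complex.exp (2 * Real.pi * Complex.I * (m : ℂ) / b) = phi b (m : ZMod b) := by
  set z : ZMod b := (m : ZMod b) with hz
  have hdvd : (b : ℤ) ∣ m - (z.val : ℤ) := by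
    rw [← ZMod.intCast_zmod_eq_zero_iff_dvd]
    push_cast
    rw [natCast_zmod_val, hz, sub_self]
  obtain ⟨k, hk⟩ := hdvd
  have hm : (m : ℂ) = (z.val : ℂ) + b * k := by
    have : m = (z.val : ℤ) + b * k := by linarith
    rw [this]; push_cast; ring
  have hbne : (b : ℂ) ≠ 0 := Nat.cast_ne_zero.mpr (NeZero.ne b)
  rw [hm, phi]
  have harg : 2 * (Real.pi:ℂ) * Complex.I * ((z.val : ℂ) + b * k) / b
      = 2 * Real.pi * Complex.I * (z.val : ℂ) / b + k * (2 * Real.pi * Complex.I) := by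
    field_simp
  rw [harg, Complex.exp_add, Complex.exp_int_mul_two_pi_mul_I, mul_one]

lemma phi_natCast {b : ℕ} [NeZero b] (m : ℕ) :
    Complex.exp (2 * Real.pi * Complex.I * (m : ℂ) / b) = phi b (m : ZMod b) := by
  have := phi_intCast (b := b) (m : ℤ)
  push_cast at this ⊢
  exact this

lemma phi_zero {b : ℕ} [NeZero b] : phi b 0 = 1 := by
  simp [phi, ZMod.val_zero]

lemma phi_add {b : ℕ} [NeZero b] (z w : ZMod b) : phi b (z + w) = phi b z * phi b w := by
  have key : phi b z * phi b w = Complex.exp (2 * Real.pi * Complex.I * ((z.val + w.val : ℕ) : ℂ) / b) := by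
    rw [phi, phi, ← Complex.exp_add]
    congr 1
    push_cast; ring
  rw [key, phi_natCast]
  congr 1
  push_cast [natCast_zmod_val]
  rfl

lemma phi_abs {b : ℕ} [NeZero b] (z : ZMod b) : ‖phi b z‖ = 1 := by
  rw [phi]
  have : 2 * (Real.pi:ℂ) * Complex.I * (z.val:ℂ) / b
      = ((2 * Real.pi * z.val / b : ℝ) : ℂ) * Complex.I := by push_cast; ring
  rw [this, Complex.norm_exp_ofReal_mul_I]

lemma phi_neg {b : ℕ} [NeZero b] (z : ZMod b) : phi b (-z) = (starRingEnd ℂ) (phi b z) := by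
  have h1 : phi b (-z) * phi b z = 1 := by rw [← phi_add]; simp [phi_zero]
  have h2 : (starRingEnd ℂ) (phi b z) * phi b z = 1 := by
    rw [Complex.conj_mul', phi_abs]; norm_num
  have hne : phi b z ≠ 0 := by
    intro h; rw [h, mul_zero] at h1; exact one_ne_zero h1.symm
  exact mul_right_cancel₀ hne (h1.trans h2.symm)

lemma phi_sum {b : ℕ} [NeZero b] {ι : Type*} (s : Finset ι) (f : ι → ZMod b) :
    phi b (∑ i ∈ s, f i) = ∏ i ∈ s, phi b (f i) := by
  induction s using Finset.cons_induction with
  | empty => simp [phi_zero]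
  | cons a s ha ih => rw [Finset.sum_cons, Finset.prod_cons, phi_add, ih]

lemma sum_phi {b : ℕ} [NeZero b] (hb : 1 < b) : ∑ u : ZMod b, phi b u = 0 := by
  have hcast : ∑ u : ZMod b, phi b u
      = ∑ k ∈ range b, Complex.exp (2 * Real.pi * Complex.I / b) ^ k := by
    refine Finset.sum_nbij' (fun u => (ZMod.val u : ℕ)) (fun k => (k : ZMod b)) ?_ ?_ ?_ ?_ ?_
    · intro u _; exact Finset.mem_range.mpr (ZMod.val_lt u)
    · intro k _; exact Finset.mem_univ _
    · intro u _; exact natCast_zmod_val u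
    · intro k hk; exact ZMod.val_cast_of_lt (Finset.mem_range.mp hk)
    · intro u _
      rw [← Complex.exp_nat_mul, phi]
      congr 1; ring
  rw [hcast]
  exact IsPrimitiveRoot.geom_sum_eq_zero (Complex.isPrimitiveRoot_exp b (by omega)) hb

lemma sum_phi_mul {b : ℕ} (hb : b.Prime) (c : ZMod b) :
    haveI : NeZero b := ⟨hb.ne_zero⟩
    ∑ u : ZMod b, phi b (c * u) = if c = 0 then (b : ℂ) else 0 := by
  haveI : NeZero b := ⟨hb.ne_zero⟩
  haveI : Fact b.Prime := ⟨hb⟩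
  split_ifs with hc
  · subst hc; simp [phi_zero, ZMod.card]
  · rw [show (0:ℂ) = ∑ u : ZMod b, phi b u from (sum_phi hb.one_lt).symm]
    exact Fintype.sum_equiv (Equiv.mulLeft₀ c hc) _ _ (fun u => rfl)

lemma char_vector_sum {b : ℕ} (hb : b.Prime) {n : ℕ} (v : Fin n → ZMod b) :
    haveI : NeZero b := ⟨hb.ne_zero⟩
    ∑ w : Fin n → ZMod b, phi b (∑ j, v j * w j)
      = if v = 0 then ((b : ℂ)) ^ n else 0 := by
  haveI : NeZero b := ⟨hb.ne_zero⟩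
  have h1 : ∀ w : Fin n → ZMod b, phi b (∑ j, v j * w j) = ∏ j, phi b (v j * w j) :=
    fun w => phi_sum _ _
  simp_rw [h1]
  rw [← Fintype.piFinset_univ]
  rw [← Finset.prod_univ_sum (fun _ : Fin n => (univ : Finset (ZMod b)))
    (fun j u => phi b (v j * u))]
  simp_rw [sum_phi_mul hb]
  by_cases hv : v = 0
  · subst hv; simp
  · obtain ⟨j, hj⟩ := Function.ne_iff.mp hv
    rw [if_neg hv]
    exact Finset.prod_eq_zero (Finset.mem_univ j) (by rw [if_neg (by simpa using hj)])



lemma digits_sum_lt {b : ℕ} (hb : 0 < b) (s : ℕ) (f : ℕ → ℕ) (hf : ∀ k < s, f k < b) :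
    ∑ k ∈ range s, f k * b ^ k < b ^ s := by
  induction s with
  | zero => simp
  | succ s ih =>
    have h1 : ∑ k ∈ range s, f k * b ^ k < b ^ s := ih (fun k hk => hf k (by omega))
    have h2 : f s * b ^ s ≤ (b - 1) * b ^ s :=
      Nat.mul_le_mul_right _ (by have := hf s (by omega); omega)
    rw [Finset.sum_range_succ, pow_succ]
    have hb1 : 1 + (b - 1) = b := by omega
    calc ∑ k ∈ range s, f k * b ^ k + f s * b ^ s
        < b ^ s + (b - 1) * b ^ s := by omega
      _ = (1 + (b - 1)) * b ^ s := by ring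
      _ = b ^ s * b := by rw [hb1]; ring

lemma digit_extract {b : ℕ} (hb : 0 < b) (s : ℕ) (f : ℕ → ℕ) (hf : ∀ k < s, f k < b)
    {a : ℕ} (ha : a < s) :
    (∑ k ∈ range s, f k * b ^ k) / b ^ a % b = f a := by
  have hsplit : ∑ k ∈ range s, f k * b ^ k
      = (∑ k ∈ range a, f k * b ^ k) + b ^ a * (f a + b * ∑ k ∈ Ico (a+1) s, f k * b ^ (k - (a+1))) := by
    rw [← Finset.sum_range_add_sum_Ico _ (show a + 1 ≤ s by omega), Finset.sum_range_succ]
    have h3 : ∑ k ∈ Ico (a+1) s, f k * b ^ k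
        = ∑ k ∈ Ico (a+1) s, b ^ (a+1) * (f k * b ^ (k - (a+1))) := by
      refine Finset.sum_congr rfl fun k hk => ?_
      obtain ⟨hk1, hk2⟩ := Finset.mem_Ico.mp hk
      have hbk : b ^ k = b ^ (a+1) * b ^ (k - (a+1)) := by
        rw [← pow_add]
        congr 1
        omega
      rw [hbk]; ring
    rw [h3, ← Finset.mul_sum, pow_succ]
    ring
  rw [hsplit]
  have hA : (∑ k ∈ range a, f k * b ^ k) < b ^ a :=
    digits_sum_lt hb a f (fun k hk => hf k (by omega))
  rw [Nat.add_mul_div_left _ _ (Nat.pow_pos hb), Nat.div_eq_of_lt hA, zero_add,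
    Nat.add_mul_mod_self_left, Nat.mod_eq_of_lt (hf a ha)]

lemma digit_reconstruct {b : ℕ} (hb : 0 < b) :
    ∀ (M η : ℕ), η < b ^ M → ∑ a ∈ range M, (η / b ^ a % b) * b ^ a = η := by
  intro M
  induction M with
  | zero => intro η h; simp at h ⊢; omega
  | succ M ih =>
    intro η h
    rw [Finset.sum_range_succ']
    have key : ∀ a, η / b ^ (a + 1) = (η / b) / b ^ a := fun a => by
      rw [pow_succ', Nat.div_div_eq_div_mul]
    have hstep : ∑ a ∈ range M, (η / b ^ (a + 1) % b) * b ^ (a + 1)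
        = b * ∑ a ∈ range M, ((η / b) / b ^ a % b) * b ^ a := by
      rw [Finset.mul_sum]
      refine Finset.sum_congr rfl fun a _ => ?_
      rw [key a, pow_succ']
      ring
    rw [hstep, ih (η / b) (by
      rw [Nat.div_lt_iff_lt_mul hb]
      calc η < b ^ (M + 1) := h
        _ = b ^ M * b := pow_succ b M)]
    simp only [pow_zero, Nat.div_one, mul_one]
    exact Nat.div_add_mod η b

lemma digit_inj {b : ℕ} (hb : 0 < b) {M η₁ η₂ : ℕ} (h1 : η₁ < b ^ M) (h2 : η₂ < b ^ M)
    (h : ∀ a < M, η₁ / b ^ a % b = η₂ / b ^ a % b) : η₁ = η₂ := by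
  rw [← digit_reconstruct hb M η₁ h1, ← digit_reconstruct hb M η₂ h2]
  exact Finset.sum_congr rfl fun a ha => by rw [h a (Finset.mem_range.mp ha)]

/-- Sum over `η ∈ range (b^M)` reindexed as a sum over digit tuples in `ZMod b`. -/
lemma sum_range_pow_eq_sum_tuples {b : ℕ} [NeZero b] (M : ℕ) (F : (Fin M → ZMod b) → ℂ) :
    ∑ η ∈ range (b ^ M), F (fun a => ((η / b ^ (a : ℕ) % b : ℕ) : ZMod b))
      = ∑ g : Fin M → ZMod b, F g := by
  have hb : 0 < b := Nat.pos_of_ne_zero (NeZero.ne b)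
  refine Finset.sum_nbij' (fun η => fun a : Fin M => ((η / b ^ (a : ℕ) % b : ℕ) : ZMod b))
    (fun g => ∑ a ∈ range M, (if h : a < M then (g ⟨a, h⟩).val else 0) * b ^ a) ?_ ?_ ?_ ?_ ?_
  · intro η _; exact Finset.mem_univ _
  · intro g _
    refine Finset.mem_range.mpr (digits_sum_lt hb M _ fun k hk => ?_)
    rw [dif_pos hk]; exact ZMod.val_lt _
  · intro η hη
    dsimp only
    have hlt := Finset.mem_range.mp hη
    have : ∀ a ∈ range M, (if h : a < M then
        (((η / b ^ a % b : ℕ) : ZMod b)).val else 0) * b ^ a = (η / b ^ a % b) * b ^ a := by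
      intro a ha
      rw [dif_pos (Finset.mem_range.mp ha), ZMod.val_cast_of_lt (Nat.mod_lt _ hb)]
    rw [Finset.sum_congr rfl this, digit_reconstruct hb M η hlt]
  · intro g _
    funext a
    have : (∑ k ∈ range M, (if h : k < M then (g ⟨k, h⟩).val else 0) * b ^ k) / b ^ (a:ℕ) % b
        = (if h : (a:ℕ) < M then (g ⟨(a:ℕ), h⟩).val else 0) := by
      refine digit_extract hb M _ (fun k hk => ?_) a.isLt
      rw [dif_pos hk]; exact ZMod.val_lt _
    rw [this, dif_pos a.isLt]
    simp only [Fin.eta]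
    rw [ZMod.natCast_val, ZMod.cast_id]
  · intro η _; rfl



/-- `a`-th `b`-adic digit as a natural number. -/
def nd (b a : ℕ) (x : ℝ) : ℕ := ⌊(b:ℝ) ^ (a+1) * x⌋₊ % b

lemma xdigit_eq_nd {b : ℕ} (a : ℕ) {x : ℝ} (hx : 0 ≤ x) :
    xdigit b a x = (nd b a x : ℤ) := by
  have h0 : (0:ℝ) ≤ (b:ℝ) ^ (a+1) * x :=
    mul_nonneg (pow_nonneg (Nat.cast_nonneg b) _) hx
  rw [xdigit, nd, ← Int.natCast_floor_eq_floor h0]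
  push_cast
  ring

lemma nd_lt {b : ℕ} (hb : 0 < b) (a : ℕ) (x : ℝ) : nd b a x < b := Nat.mod_lt _ hb

lemma nd_eq_floor_digit {b : ℕ} (hb : 0 < b) {a M : ℕ} (ha : a < M) {x : ℝ} (hx : 0 ≤ x) :
    nd b a x = ⌊(b:ℝ) ^ M * x⌋₊ / b ^ (M - 1 - a) % b := by
  have hbR : (0:ℝ) < (b:ℝ) := Nat.cast_pos.mpr hb
  have key : (b:ℝ) ^ (a+1) * x = ((b:ℝ) ^ M * x) / ((b ^ (M - 1 - a) : ℕ) : ℝ) := by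
    have hpow : (b:ℝ) ^ (a+1) * (b:ℝ) ^ (M - 1 - a) = (b:ℝ) ^ M := by
      rw [← pow_add]; congr 1; omega
    push_cast
    rw [eq_div_iff (by positivity), mul_right_comm, hpow]
  rw [nd, key, Nat.floor_div_natCast]

lemma floor_lt_pow {b M : ℕ} (hb : 0 < b) {x : ℝ} (hx0 : 0 ≤ x) (hx1 : x < 1) :
    ⌊(b:ℝ) ^ M * x⌋₊ < b ^ M := by
  have hbM : (0:ℝ) < (b:ℝ) ^ M := by positivity
  rw [Nat.floor_lt (mul_nonneg hbM.le hx0)]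
  push_cast
  nlinarith

lemma digits_eq_iff_floor_eq {b : ℕ} (hb : 0 < b) (M : ℕ) {u y : ℝ}
    (hu0 : 0 ≤ u) (hu1 : u < 1) (hy0 : 0 ≤ y) (hy1 : y < 1) :
    (∀ a < M, nd b a u = nd b a y) ↔ ⌊(b:ℝ) ^ M * u⌋₊ = ⌊(b:ℝ) ^ M * y⌋₊ := by
  constructor
  · intro h
    refine digit_inj hb (floor_lt_pow hb hu0 hu1) (floor_lt_pow hb hy0 hy1) fun e he => ?_
    have ha : M - 1 - e < M := by omega
    have h1 := nd_eq_floor_digit hb ha hu0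
    have h2 := nd_eq_floor_digit hb ha hy0
    have he' : M - 1 - (M - 1 - e) = e := by omega
    rw [he'] at h1 h2
    rw [← h1, ← h2]
    exact h (M - 1 - e) ha
  · intro h a ha
    rw [nd_eq_floor_digit hb ha hu0, nd_eq_floor_digit hb ha hy0, h]

lemma natFloor_eq_iff_mem {b M : ℕ} (hb : 0 < b) {u : ℝ} (hu : 0 ≤ u) (m : ℕ) :
    ⌊(b:ℝ) ^ M * u⌋₊ = m ↔ u ∈ Set.Ico ((m : ℝ) / (b:ℝ)^M) (((m:ℝ)+1) / (b:ℝ)^M) := by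
  have hbM : (0:ℝ) < (b:ℝ) ^ M := by positivity
  rw [Nat.floor_eq_iff (mul_nonneg (le_of_lt hbM) hu)]
  constructor
  · rintro ⟨h1, h2⟩
    exact ⟨by rw [div_le_iff₀ hbM]; linarith, by rw [lt_div_iff₀ hbM]; push_cast; linarith⟩
  · rintro ⟨h1, h2⟩
    rw [div_le_iff₀ hbM] at h1
    rw [lt_div_iff₀ hbM] at h2
    exact ⟨by linarith, by push_cast at h2 ⊢; linarith⟩

section NetPoint
variable {b s : ℕ}

/-- Extension of coefficients to `ℕ`. -/
def ccf (s : ℕ) (cf : Fin s → ℕ) : ℕ → ℕ := fun j => if h : j < s then cf ⟨j, h⟩ else 0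

/-- The integer `m` with `y = m / b^s`. -/
def netInt (b s : ℕ) (cf : Fin s → ℕ) : ℕ := ∑ k ∈ range s, ccf s cf (s - 1 - k) * b ^ k

lemma ccf_lt {cf : Fin s → ℕ} (hb : 0 < b) (hcf : ∀ k, cf k < b) (j : ℕ) : ccf s cf j < b := by
  rw [ccf]; split_ifs with h
  · exact hcf _
  · exact hb

lemma netInt_lt (hb : 0 < b) {cf : Fin s → ℕ} (hcf : ∀ k, cf k < b) : netInt b s cf < b ^ s :=
  digits_sum_lt hb s _ (fun k _ => ccf_lt hb hcf _)

lemma netInt_cast (hb : 0 < b) (cf : Fin s → ℕ) :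
    ((netInt b s cf : ℕ) : ℝ)
      = (b:ℝ) ^ s * ∑ k : Fin s, (cf k : ℝ) * (((b:ℝ) ^ ((k:ℕ) + 1))⁻¹) := by
  have hbR : (0:ℝ) < (b:ℝ) := Nat.cast_pos.mpr hb
  have hterm : ∀ k : Fin s, (b:ℝ) * ((cf k : ℝ) * (((b:ℝ) ^ ((k:ℕ) + 1))⁻¹)) = 0 ∨ True := fun _ => Or.inr trivial
  rw [Finset.mul_sum]
  have hRHS : ∀ k : Fin s, (b:ℝ)^s * ((cf k : ℝ) * ((b:ℝ) ^ ((k:ℕ)+1))⁻¹)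
      = (ccf s cf (k:ℕ) : ℝ) * (b:ℝ) ^ (s - 1 - (k:ℕ)) := by
    intro k
    have hpow : (b:ℝ) ^ (s - 1 - (k:ℕ)) * (b:ℝ) ^ ((k:ℕ)+1) = (b:ℝ) ^ s := by
      rw [← pow_add]; congr 1; have := k.isLt; omega
    have hcc : ccf s cf (k:ℕ) = cf k := by rw [ccf, dif_pos k.isLt]
    rw [hcc]
    field_simp
    rw [← hpow]
    ring
  rw [Finset.sum_congr rfl (fun k _ => hRHS k)]
  have hfin := Fin.sum_univ_eq_sum_range (fun j => (ccf s cf j : ℝ) * (b:ℝ) ^ (s - 1 - j)) s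
  rw [hfin]
  rw [netInt]
  push_cast
  rw [← Finset.sum_range_reflect (fun j => (ccf s cf j : ℝ) * (b:ℝ) ^ (s - 1 - j)) s]
  refine Finset.sum_congr rfl fun k hk => ?_
  have hks := Finset.mem_range.mp hk
  have : s - 1 - (s - 1 - k) = k := by omega
  rw [this]

variable {m : ℕ} {y : ℝ} (hb : 0 < b) (hmlt : m < b ^ s) (hm : (m:ℝ) = (b:ℝ) ^ s * y) (hy0 : 0 ≤ y)

include hb hmlt hm in
lemma netY_lt_one : y < 1 := by
  have hbs : (0:ℝ) < (b:ℝ) ^ s := by positivity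
  have : (m:ℝ) < ((b ^ s : ℕ):ℝ) := Nat.cast_lt.mpr hmlt
  push_cast at this
  nlinarith

include hb hm hy0 in
lemma floor_pow_netY {M : ℕ} (hM : s ≤ M) : ⌊(b:ℝ) ^ M * y⌋₊ = m * b ^ (M - s) := by
  have : (b:ℝ) ^ M * y = ((m * b ^ (M - s) : ℕ) : ℝ) := by
    push_cast
    rw [hm, show (b:ℝ)^M = (b:ℝ)^s * (b:ℝ)^(M-s) by rw [← pow_add]; congr 1; omega]
    ring
  rw [this, Nat.floor_natCast]

include hb hm hy0 in
lemma nd_netY_ge {a : ℕ} (ha : s ≤ a) : nd b a y = 0 := by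
  rw [nd, show (a+1) = (a+1) by rfl]
  rw [floor_pow_netY hb hm hy0 (show s ≤ a + 1 by omega)]
  have : b ∣ m * b ^ (a + 1 - s) := Dvd.dvd.mul_left (dvd_pow_self b (by omega)) m
  omega

lemma nd_netY_lt (hb : 0 < b) {cf : Fin s → ℕ} (hcf : ∀ k, cf k < b)
    (hmdef : m = netInt b s cf) (hm : (m:ℝ) = (b:ℝ) ^ s * y) (hy0 : 0 ≤ y)
    {a : ℕ} (ha : a < s) : nd b a y = ccf s cf a := by
  rw [nd_eq_floor_digit hb ha hy0 (M := s)]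
  have hfl : ⌊(b:ℝ) ^ s * y⌋₊ = m := by
    have := floor_pow_netY hb hm hy0 (le_refl s)
    simpa using this
  rw [hfl, hmdef, netInt]
  have := digit_extract hb s (fun k => ccf s cf (s - 1 - k)) (fun k _ => ccf_lt hb hcf _)
    (show s - 1 - a < s by omega)
  rw [this]
  beta_reduce
  rw [show s - 1 - (s - 1 - a) = a from by omega]

end NetPoint


lemma tau_eq_zero {b η a : ℕ} (h : η < b ^ a) : η / b ^ a % b = 0 := by
  rw [Nat.div_eq_of_lt h]; rfl

lemma tau_eq_zero' {b η M a : ℕ} (hb : 1 < b) (hη : η < b ^ M) (h : M ≤ a) :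
    η / b ^ a % b = 0 :=
  tau_eq_zero (lt_of_lt_of_le hη (Nat.pow_le_pow_right (by omega) h))

/-- Walsh function evaluated via the character `phi`. -/
lemma walsh1_eq_phi {b : ℕ} (hb : 1 < b) {M η : ℕ} (hη : η < b ^ M) {u : ℝ} (hu : 0 ≤ u) :
    haveI : NeZero b := ⟨by omega⟩
    walsh1 b η u
      = phi b (∑ a ∈ range M, ((η / b ^ a % b : ℕ) : ZMod b) * ((nd b a u : ℕ) : ZMod b)) := by
  haveI : NeZero b := ⟨by omega⟩
  set L := max (η + 1) M with hL
  have hT : ∑ a ∈ range (η+1), ((η / b ^ a % b : ℕ) : ℂ) * ((xdigit b a u : ℤ) : ℂ)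
      = ((∑ a ∈ range M, (η / b ^ a % b) * nd b a u : ℕ) : ℂ) := by
    have h1 : ∀ a ∈ range (η+1), ((η / b ^ a % b : ℕ) : ℂ) * ((xdigit b a u : ℤ) : ℂ)
        = ((η / b ^ a % b * nd b a u : ℕ) : ℂ) := by
      intro a _
      rw [xdigit_eq_nd a hu]
      push_cast
      ring
    rw [Finset.sum_congr rfl h1]
    push_cast
    rw [Finset.sum_subset (Finset.range_subset_range.mpr (le_max_left (η+1) M))
      (fun a _ ha => by
        have haη : η + 1 ≤ a := by
          by_contra hcon
          exact ha (Finset.mem_range.mpr (by omega))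
        have : η / b ^ a % b = 0 := tau_eq_zero
          (lt_of_lt_of_le ((Nat.lt_pow_self hb : η < b ^ η)) (Nat.pow_le_pow_right (by omega) (by omega)))
        rw [this]
        push_cast
        ring)]
    rw [Finset.sum_subset (Finset.range_subset_range.mpr (le_max_right (η+1) M))
      (fun a _ ha => by
        have haM : M ≤ a := by
          by_contra hcon
          exact ha (Finset.mem_range.mpr (by omega))
        rw [tau_eq_zero' hb hη haM]
        push_cast
        ring)]
  rw [walsh1, hT]
  have harg : 2 * (Real.pi:ℂ) * Complex.I / b * ((∑ a ∈ range M, (η / b ^ a % b) * nd b a u : ℕ) : ℂ)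
      = 2 * Real.pi * Complex.I * ((∑ a ∈ range M, (η / b ^ a % b) * nd b a u : ℕ) : ℂ) / b := by
    ring
  rw [harg, phi_natCast]
  congr 1
  push_cast
  rfl

lemma walsh1_abs {b : ℕ} (η : ℕ) (u : ℝ) : ‖walsh1 b η u‖ = 1 := by
  rw [walsh1]
  have hS : ∑ a ∈ range (η+1), ((η / b ^ a % b : ℕ) : ℂ) * ((xdigit b a u : ℤ) : ℂ)
      = (((∑ a ∈ range (η+1), (η / b ^ a % b : ℕ) * xdigit b a u : ℤ)) : ℂ) := by
    simp only [Int.cast_sum, Int.cast_mul, Int.cast_natCast]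
  rw [hS]
  generalize (∑ a ∈ range (η+1), (η / b ^ a % b : ℕ) * xdigit b a u : ℤ) = Tz
  have : 2 * (Real.pi:ℂ) * Complex.I / b * ((Tz : ℤ) : ℂ)
      = ((2 * Real.pi * (Tz : ℝ) / b : ℝ) : ℂ) * Complex.I := by
    push_cast
    ring
  rw [this, Complex.norm_exp_ofReal_mul_I]

lemma measurable_walsh1 {b η : ℕ} : Measurable (walsh1 b η) := by
  unfold walsh1
  apply Complex.measurable_exp.comp
  apply Measurable.const_mul
  apply Finset.measurable_sum
  intro a _
  apply Measurable.const_mul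
  have hfl : Measurable (fun u : ℝ => ⌊(b:ℝ) ^ (a+1) * u⌋) :=
    Int.measurable_floor.comp (measurable_id.const_mul _)
  exact (measurable_from_top (f := fun z : ℤ => ((z % (b:ℤ) : ℤ) : ℂ))).comp hfl

lemma walsh1_zero_eq_one {b : ℕ} (u : ℝ) : walsh1 b 0 u = 1 := by
  rw [walsh1]
  norm_num

/-- The Dirichlet kernel evaluation. -/
lemma dirichlet_sum {b : ℕ} (hb : b.Prime) (M : ℕ) {u y : ℝ}
    (hu0 : 0 ≤ u) (hu1 : u < 1) (hy0 : 0 ≤ y) (hy1 : y < 1) :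
    ∑ η ∈ range (b ^ M), (starRingEnd ℂ) (walsh1 b η u) * walsh1 b η y
      = if ⌊(b:ℝ) ^ M * u⌋₊ = ⌊(b:ℝ) ^ M * y⌋₊ then ((b:ℂ)) ^ M else 0 := by
  haveI : NeZero b := ⟨hb.ne_zero⟩
  have hb1 : 1 < b := hb.one_lt
  have hb0 : 0 < b := hb.pos
  set δ : Fin M → ZMod b :=
    fun a => ((nd b (a:ℕ) y : ℕ) : ZMod b) - ((nd b (a:ℕ) u : ℕ) : ZMod b) with hδ
  have hterm : ∀ η ∈ range (b ^ M),
      (starRingEnd ℂ) (walsh1 b η u) * walsh1 b η y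
        = (fun g : Fin M → ZMod b => phi b (∑ a, δ a * g a))
            (fun a : Fin M => ((η / b ^ (a:ℕ) % b : ℕ) : ZMod b)) := by
    intro η hη
    have hηlt := Finset.mem_range.mp hη
    rw [walsh1_eq_phi hb1 hηlt hu0, walsh1_eq_phi hb1 hηlt hy0, ← phi_neg, ← phi_add]
    congr 1
    rw [← Fin.sum_univ_eq_sum_range
      (fun a => ((η / b ^ a % b : ℕ) : ZMod b) * ((nd b a u : ℕ) : ZMod b)) M,
      ← Fin.sum_univ_eq_sum_range
      (fun a => ((η / b ^ a % b : ℕ) : ZMod b) * ((nd b a y : ℕ) : ZMod b)) M,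
      neg_add_eq_sub, ← Finset.sum_sub_distrib]
    refine Finset.sum_congr rfl fun a _ => ?_
    rw [hδ]
    ring
  rw [Finset.sum_congr rfl hterm,
    sum_range_pow_eq_sum_tuples M (fun g : Fin M → ZMod b => phi b (∑ a, δ a * g a)),
    show (fun g : Fin M → ZMod b => phi b (∑ a, δ a * g a)) = fun g => phi b (∑ a, δ a * g a) from rfl]
  rw [char_vector_sum hb δ]
  have hiff : δ = 0 ↔ ⌊(b:ℝ) ^ M * u⌋₊ = ⌊(b:ℝ) ^ M * y⌋₊ := by
    rw [← digits_eq_iff_floor_eq hb0 M hu0 hu1 hy0 hy1]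
    constructor
    · intro h a ha
      have := congrFun h ⟨a, ha⟩
      rw [hδ] at this
      simp only [Pi.zero_apply, sub_eq_zero] at this
      have h1 := ZMod.val_cast_of_lt (nd_lt hb0 a y)
      have h2 := ZMod.val_cast_of_lt (nd_lt hb0 a u)
      rw [← h2, ← h1, this]
    · intro h
      funext a
      rw [hδ]
      simp only [Pi.zero_apply, sub_eq_zero]
      rw [h (a:ℕ) a.isLt]
  by_cases hc : δ = 0
  · rw [if_pos hc, if_pos (hiff.mp hc)]
  · rw [if_neg hc, if_neg (fun h => hc (hiff.mpr h))]



lemma integrableOn_conj_walsh_mul {b η : ℕ} (c : ℂ) {x : ℝ} :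
    IntegrableOn (fun u => (starRingEnd ℂ) (walsh1 b η u) * c) (Set.Ico (0:ℝ) x) := by
  refine Integrable.bdd_mul (c := 1) ?_ ?_ ?_
  · exact integrableOn_const (by rw [Real.volume_Ico]; exact ENNReal.ofReal_ne_top)
  · have hm : Measurable fun u => (starRingEnd ℂ) (walsh1 b η u) :=
      (continuous_star.measurable (α := ℂ)).comp measurable_walsh1
    exact hm.aestronglyMeasurable
  · refine Filter.Eventually.of_forall fun u => ?_
    have : ‖(starRingEnd ℂ) (walsh1 b η u)‖ = ‖walsh1 b η u‖ := norm_star _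
    rw [this, walsh1_abs]

lemma walshCoeff_zero {b : ℕ} {x : ℝ} (hx : 0 ≤ x) : walshCoeff b 0 x = (x : ℂ) := by
  rw [walshCoeff]
  have : ∀ y, (starRingEnd ℂ) (walsh1 b 0 y) = (1 : ℂ) := fun y => by
    rw [walsh1_zero_eq_one]; simp
  simp_rw [this]
  rw [setIntegral_const, Real.volume_real_Ico, max_eq_left (by linarith), sub_zero,
    Complex.real_smul, mul_one]

/-- Eventual evaluation of the partial Walsh series of the indicator coefficient. -/
lemma K_eval {b : ℕ} (hb : b.Prime) {s m M : ℕ} {x y : ℝ}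
    (hx0 : 0 ≤ x) (hx1 : x ≤ 1)
    (hmlt : m < b ^ s) (hm : (m:ℝ) = (b:ℝ) ^ s * y) (hy0 : 0 ≤ y)
    (hsM : s ≤ M) (hcond : x ≤ y ∨ y + ((b:ℝ) ^ M)⁻¹ ≤ x) :
    ∑ η ∈ range (b ^ M), walshCoeff b η x * walsh1 b η y
      = if y < x then 1 else 0 := by
  have hb0 : 0 < b := hb.pos
  have hbR : (0:ℝ) < (b:ℝ) ^ M := by positivity
  have hy1 : y < 1 := netY_lt_one hb0 hmlt hm
  set m' : ℕ := m * b ^ (M - s) with hm'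
  have hflY : ⌊(b:ℝ) ^ M * y⌋₊ = m' := floor_pow_netY hb0 hm hy0 hsM
  have hm'R : ((m' : ℕ) : ℝ) = (b:ℝ) ^ M * y := by
    rw [hm']
    push_cast
    rw [hm, show (b:ℝ)^M = (b:ℝ)^s * (b:ℝ)^(M-s) by rw [← pow_add]; congr 1; omega]
    ring
  have hyc : y = (m' : ℝ) / (b:ℝ) ^ M := by
    rw [eq_div_iff hbR.ne']
    rw [hm'R]; ring
  -- step a+b : sum of integrals = integral of sum
  have ha : ∀ η ∈ range (b ^ M), walshCoeff b η x * walsh1 b η y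
      = ∫ u in Set.Ico (0:ℝ) x, (starRingEnd ℂ) (walsh1 b η u) * walsh1 b η y := by
    intro η _
    rw [walshCoeff, ← MeasureTheory.integral_mul_const]
  rw [Finset.sum_congr rfl ha, ← MeasureTheory.integral_finset_sum _
    (fun η _ => integrableOn_conj_walsh_mul (walsh1 b η y))]
  -- step c+d : integrand is an indicator on the set
  have hc : Set.EqOn (fun u => ∑ η ∈ range (b ^ M), (starRingEnd ℂ) (walsh1 b η u) * walsh1 b η y)
      (fun u => Set.indicator (Set.Ico ((m':ℝ)/(b:ℝ)^M) (((m':ℝ)+1)/(b:ℝ)^M)) (fun _ => ((b:ℂ))^M) u)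
      (Set.Ico (0:ℝ) x) := by
    intro u hu
    obtain ⟨hu0, hux⟩ := hu
    dsimp only
    have hu1 : u < 1 := lt_of_lt_of_le hux hx1
    rw [dirichlet_sum hb M hu0 hu1 hy0 hy1, hflY]
    by_cases hmem : u ∈ Set.Ico ((m':ℝ)/(b:ℝ)^M) (((m':ℝ)+1)/(b:ℝ)^M)
    · rw [Set.indicator_of_mem hmem, if_pos ((natFloor_eq_iff_mem hb0 hu0 m').mpr hmem)]
    · rw [Set.indicator_of_notMem hmem,
        if_neg (fun h => hmem ((natFloor_eq_iff_mem hb0 hu0 m').mp h))]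
  rw [MeasureTheory.setIntegral_congr_fun measurableSet_Ico hc,
    MeasureTheory.setIntegral_indicator measurableSet_Ico,
    MeasureTheory.setIntegral_const, Set.Ico_inter_Ico, Real.volume_real_Ico]
  have hc1 : (0:ℝ) ⊔ ((m':ℝ)/(b:ℝ)^M) = y := by
    rw [← hyc, max_eq_right hy0]
  have hc2 : ((m':ℝ)+1)/(b:ℝ)^M = y + ((b:ℝ)^M)⁻¹ := by
    rw [add_div, ← hyc]
    ring
  rw [hc1, hc2]
  rcases hcond with h | h
  · have hxy : ¬ (y < x) := not_lt.mpr h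
    rw [if_neg hxy]
    have : x ⊓ (y + ((b:ℝ)^M)⁻¹) - y ≤ 0 := by
      have := min_le_left x (y + ((b:ℝ)^M)⁻¹)
      linarith
    rw [max_eq_right this]
    simp
  · have hyx : y < x := by nlinarith [inv_pos.mpr hbR]
    rw [if_pos hyx]
    have hmin : x ⊓ (y + ((b:ℝ)^M)⁻¹) = y + ((b:ℝ)^M)⁻¹ := min_eq_right h
    rw [hmin, show y + ((b:ℝ)^M)⁻¹ - y = ((b:ℝ)^M)⁻¹ by ring,
      max_eq_left (by positivity), Complex.real_smul]
    push_cast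
    rw [inv_mul_cancel₀ (show ((b:ℂ))^M ≠ 0 from
      pow_ne_zero _ (Nat.cast_ne_zero.mpr hb0.ne'))]



variable {b n s d : ℕ}

/-- Coefficient digits of a net point. -/
def cfv (Cm : Fin d → Matrix (Fin s) (Fin n) (ZMod b)) (i : Fin d) (ν : ℕ) : Fin s → ℕ :=
  fun k => ((Cm i).mulVec (digitVec b n ν) k).val

lemma cfv_lt (hb : 0 < b) (Cm : Fin d → Matrix (Fin s) (Fin n) (ZMod b)) (i : Fin d) (ν : ℕ)
    (k : Fin s) : cfv Cm i ν k < b := by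
  haveI : NeZero b := ⟨hb.ne'⟩
  exact ZMod.val_lt _

lemma netpoint_m (hb : 0 < b) (Cm : Fin d → Matrix (Fin s) (Fin n) (ZMod b)) (i : Fin d) (ν : ℕ) :
    ((netInt b s (cfv Cm i ν) : ℕ) : ℝ) = (b:ℝ) ^ s * digitalPoint Cm ν i :=
  netInt_cast hb (cfv Cm i ν)

lemma netpoint_nonneg (Cm : Fin d → Matrix (Fin s) (Fin n) (ZMod b)) (i : Fin d) (ν : ℕ) :
    0 ≤ digitalPoint Cm ν i := by
  rw [digitalPoint]
  refine Finset.sum_nonneg fun k _ => mul_nonneg (Nat.cast_nonneg _) (by positivity)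

/-- Walsh function at a net point, as a character value. -/
lemma walsh_at_netpoint (hb : b.Prime) (Cm : Fin d → Matrix (Fin s) (Fin n) (ZMod b))
    (i : Fin d) (ν : ℕ) (τ : ℕ) :
    haveI : NeZero b := ⟨hb.ne_zero⟩
    walsh1 b τ (digitalPoint Cm ν i)
      = phi b (∑ k : Fin s, dualDigitVec b s τ k * ((Cm i).mulVec (digitVec b n ν) k)) := by
  haveI : NeZero b := ⟨hb.ne_zero⟩
  have hb1 : 1 < b := hb.one_lt
  have hb0 : 0 < b := hb.pos
  set y := digitalPoint Cm ν i with hy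
  set L := max s (τ + 1) with hL
  have hy0 : 0 ≤ y := netpoint_nonneg Cm i ν
  have hm := netpoint_m hb0 Cm i ν
  have hτL : τ < b ^ L := lt_of_lt_of_le ((Nat.lt_pow_self hb1 : τ < b ^ τ))
    (Nat.pow_le_pow_right (by omega) (by omega))
  rw [walsh1_eq_phi hb1 hτL hy0]
  congr 1
  rw [← Finset.sum_subset (Finset.range_subset_range.mpr (le_max_left s (τ+1)))
    (fun a _ ha => by
      have has : s ≤ a := by
        by_contra hcon
        exact ha (Finset.mem_range.mpr (by omega))
      rw [nd_netY_ge hb0 hm hy0 has]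
      simp)]
  rw [← Fin.sum_univ_eq_sum_range
    (fun a => ((τ / b ^ a % b : ℕ) : ZMod b) * ((nd b a y : ℕ) : ZMod b)) s]
  refine Finset.sum_congr rfl fun k _ => ?_
  have hnd : nd b (k:ℕ) y = ccf s (cfv Cm i ν) (k:ℕ) :=
    nd_netY_lt hb0 (cfv_lt hb0 Cm i ν) rfl hm hy0 k.isLt
  rw [hnd, ccf, dif_pos k.isLt]
  congr 1
  rw [cfv]
  simp only [Fin.eta]
  rw [natCast_zmod_val]

/-- Character sum over the digital net. -/
lemma net_char_sum (hb : b.Prime) (Cm : Fin d → Matrix (Fin s) (Fin n) (ZMod b))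
    (t : Fin d → ℕ) :
    ∑ ν : Fin (b ^ n), ∏ i, walsh1 b (t i) (digitalPoint Cm (ν:ℕ) i)
      = if InDual Cm t then ((b:ℂ)) ^ n else 0 := by
  haveI : NeZero b := ⟨hb.ne_zero⟩
  set v : Fin n → ZMod b :=
    ∑ i, Matrix.mulVec (Matrix.transpose (Cm i)) (dualDigitVec b s (t i)) with hv
  have hstep : ∀ ν : ℕ, ∏ i, walsh1 b (t i) (digitalPoint Cm ν i)
      = phi b (∑ j, v j * digitVec b n ν j) := by
    intro ν
    have h1 : ∀ i, walsh1 b (t i) (digitalPoint Cm ν i)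
        = phi b (∑ k : Fin s, dualDigitVec b s (t i) k * ((Cm i).mulVec (digitVec b n ν) k)) :=
      fun i => walsh_at_netpoint hb Cm i ν (t i)
    rw [Finset.prod_congr rfl (fun i _ => h1 i), ← phi_sum]
    congr 1
    have h2 : ∀ i : Fin d, (∑ k : Fin s, dualDigitVec b s (t i) k * ((Cm i).mulVec (digitVec b n ν) k))
        = ∑ j, (Matrix.mulVec (Matrix.transpose (Cm i)) (dualDigitVec b s (t i))) j
            * digitVec b n ν j := by
      intro i
      simp only [Matrix.mulVec, dotProduct, Matrix.transpose_apply, Finset.mul_sum,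
        Finset.sum_mul]
      rw [Finset.sum_comm]
      exact Finset.sum_congr rfl fun j _ => Finset.sum_congr rfl fun k _ => by ring
    rw [Finset.sum_congr rfl (fun i _ => h2 i), Finset.sum_comm]
    refine Finset.sum_congr rfl fun j _ => ?_
    rw [hv, ← Finset.sum_mul]
    congr 1
    rw [Finset.sum_apply]
  have hreindex : ∑ ν : Fin (b ^ n), ∏ i, walsh1 b (t i) (digitalPoint Cm (ν:ℕ) i)
      = ∑ w : Fin n → ZMod b, phi b (∑ j, v j * w j) := by
    rw [Fin.sum_univ_eq_sum_range (fun ν => ∏ i, walsh1 b (t i) (digitalPoint Cm ν i)) (b ^ n)]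
    rw [Finset.sum_congr rfl (fun ν _ => hstep ν)]
    exact sum_range_pow_eq_sum_tuples n (fun w => phi b (∑ j, v j * w j))
  rw [hreindex, char_vector_sum hb v]
  rw [InDual, ← hv]
  by_cases hvz : v = 0 <;> simp [hvz]


end DWS

open DWS


open DigitalNets in
/-- Lemma 4.5: Walsh series representation of the discrepancy function of a
digital net: `D_P(x) = Σ_{t ∈ 𝒟(C₁,…,C_d) \ {0}} χ̂_{[0,x)}(t)`, as a limit of partial sums over
`t` with all coordinates `< b^M`. -/
theorem discrepancy_walsh_series (b n d s : ℕ) (hb : b.Prime) (hn : 1 ≤ n) (hd : 1 ≤ d)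
    (hs : n ≤ s) (Cm : Fin d → Matrix (Fin s) (Fin n) (ZMod b))
    (x : Fin d → ℝ) (hx : x ∈ unitCube d) :
    Filter.Tendsto (fun M : ℕ =>
        ∑ t ∈ (Fintype.piFinset fun _ : Fin d => Finset.range (b ^ M)).filter
            (fun t => InDual Cm t ∧ t ≠ 0),
          ∏ i, walshCoeff b (t i) (x i))
      Filter.atTop
      (nhds ((discrepancy d (b ^ n) (digitalNet Cm) x : ℂ))) := by

  classical
  have hb1 : 1 < b := hb.one_lt
  have hb0 : 0 < b := hb.pos
  have hxm : ∀ i, 0 ≤ x i ∧ x i < 1 := fun i => hx i (Set.mem_univ i)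
  have hbn0 : ((b:ℂ)) ^ n ≠ 0 := pow_ne_zero _ (Nat.cast_ne_zero.mpr hb0.ne')
  have hev : ∀ᶠ M : ℕ in Filter.atTop, s ≤ M ∧
      ∀ ν : Fin (b ^ n), ∀ i : Fin d,
        x i ≤ digitalPoint Cm (ν:ℕ) i ∨ digitalPoint Cm (ν:ℕ) i + ((b:ℝ) ^ M)⁻¹ ≤ x i := by
    refine (Filter.eventually_ge_atTop s).and ?_
    rw [Filter.eventually_all]
    intro ν
    rw [Filter.eventually_all]
    intro i
    rcases le_or_gt (x i) (digitalPoint Cm (ν:ℕ) i) with h | h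
    · exact Filter.Eventually.of_forall fun M => Or.inl h
    · have htend : Filter.Tendsto (fun M : ℕ => ((b:ℝ) ^ M)⁻¹) Filter.atTop (nhds 0) :=
        tendsto_inv_atTop_zero.comp (tendsto_pow_atTop_atTop_of_one_lt (by exact_mod_cast hb1))
      have hlt := htend.eventually_lt_const
        (show (0:ℝ) < x i - digitalPoint Cm (ν:ℕ) i by linarith)
      exact hlt.mono fun M hM => Or.inr (by linarith)
  refine Filter.Tendsto.congr' ?_ tendsto_const_nhds
  refine hev.mono fun M hM => ?_
  obtain ⟨hsM, hcond⟩ := hM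
  set pif := Fintype.piFinset fun _ : Fin d => Finset.range (b ^ M) with hpif
  set A := pif.filter (fun t => InDual Cm t) with hA
  have h0pif : (0 : Fin d → ℕ) ∈ pif := by
    rw [hpif, Fintype.mem_piFinset]
    intro i
    exact Finset.mem_range.mpr (pow_pos hb0 M)
  have h0dual : InDual Cm 0 := by
    rw [InDual]
    have hz : ∀ i : Fin d, dualDigitVec b s ((0 : Fin d → ℕ) i) = 0 := by
      intro i
      funext k
      simp [dualDigitVec]
    refine Finset.sum_eq_zero fun i _ => ?_
    rw [hz i, Matrix.mulVec_zero]
  have h0A : (0 : Fin d → ℕ) ∈ A := Finset.mem_filter.mpr ⟨h0pif, h0dual⟩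
  have hsplit : ∑ t ∈ pif.filter (fun t => InDual Cm t ∧ t ≠ 0), ∏ i, walshCoeff b (t i) (x i)
      = (∑ t ∈ A, ∏ i, walshCoeff b (t i) (x i))
        - ∏ i, walshCoeff b ((0 : Fin d → ℕ) i) (x i) := by
    rw [← Finset.filter_filter, ← hA, Finset.filter_ne', Finset.sum_erase_eq_sub h0A]
  have hchain : (∑ t ∈ A, ∏ i, walshCoeff b (t i) (x i)) * ((b:ℂ)) ^ n
      = ∑ ν : Fin (b ^ n), if (∀ i, digitalPoint Cm (ν:ℕ) i < x i) then (1:ℂ) else 0 := by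
    have e1 : (∑ t ∈ A, ∏ i, walshCoeff b (t i) (x i)) * ((b:ℂ)) ^ n
        = ∑ t ∈ pif, (∏ i, walshCoeff b (t i) (x i))
            * (if InDual Cm t then ((b:ℂ)) ^ n else 0) := by
      simp_rw [mul_ite, mul_zero, ← Finset.sum_filter]
      rw [← hA, ← Finset.sum_mul]
    rw [e1]
    have e2 : ∀ t ∈ pif, (∏ i, walshCoeff b (t i) (x i))
          * (if InDual Cm t then ((b:ℂ)) ^ n else 0)
        = ∑ ν : Fin (b ^ n), ∏ i,
            walshCoeff b (t i) (x i) * walsh1 b (t i) (digitalPoint Cm (ν:ℕ) i) := by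
      intro t _
      rw [← net_char_sum hb Cm t, Finset.mul_sum]
      exact Finset.sum_congr rfl fun ν _ => (Finset.prod_mul_distrib).symm
    rw [Finset.sum_congr rfl e2, Finset.sum_comm]
    refine Finset.sum_congr rfl fun ν _ => ?_
    rw [hpif, ← Finset.prod_univ_sum (fun _ : Fin d => Finset.range (b ^ M))
      (fun i η => walshCoeff b η (x i) * walsh1 b η (digitalPoint Cm (ν:ℕ) i))]
    have e3 : ∀ i : Fin d,
        ∑ η ∈ range (b ^ M), walshCoeff b η (x i) * walsh1 b η (digitalPoint Cm (ν:ℕ) i)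
          = if digitalPoint Cm (ν:ℕ) i < x i then 1 else 0 := fun i =>
      K_eval hb (hxm i).1 (le_of_lt (hxm i).2) (netInt_lt hb0 (cfv_lt hb0 Cm i ν))
        (netpoint_m hb0 Cm i ν) (netpoint_nonneg Cm i ν) hsM (hcond ν i)
    rw [Finset.prod_congr rfl (fun i _ => e3 i), Finset.prod_boole]
    by_cases hc : ∀ i, digitalPoint Cm (ν:ℕ) i < x i
    · rw [if_pos (fun i _ => hc i), if_pos hc]
    · rw [if_neg (fun h => hc (fun i => h i (Finset.mem_univ i))), if_neg hc]
  have hcount : (∑ ν : Fin (b ^ n), if (∀ i, digitalPoint Cm (ν:ℕ) i < x i) then (1:ℂ) else 0)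
      = ((Finset.univ.filter fun ν : Fin (b ^ n) =>
          digitalNet Cm ν ∈ Set.univ.pi fun i => Set.Ico (0:ℝ) (x i)).card : ℂ) := by
    rw [Finset.sum_boole]
    have hpred : Finset.univ.filter (fun ν : Fin (b ^ n) => ∀ i, digitalPoint Cm (ν:ℕ) i < x i)
        = Finset.univ.filter (fun ν : Fin (b ^ n) =>
            digitalNet Cm ν ∈ Set.univ.pi fun i => Set.Ico (0:ℝ) (x i)) := by
      apply Finset.filter_congr
      intro ν _
      constructor
      · intro h i _
        exact ⟨netpoint_nonneg Cm i ν, h i⟩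
      · intro h i
        exact (h i (Set.mem_univ i)).2
    rw [hpred]
  have hAeq : ∑ t ∈ A, ∏ i, walshCoeff b (t i) (x i)
      = ((Finset.univ.filter fun ν : Fin (b ^ n) =>
          digitalNet Cm ν ∈ Set.univ.pi fun i => Set.Ico (0:ℝ) (x i)).card : ℂ) / ((b:ℂ)) ^ n := by
    rw [eq_div_iff hbn0, hchain, hcount]
  have hzero : ∏ i, walshCoeff b ((0 : Fin d → ℕ) i) (x i) = ∏ i, ((x i : ℝ) : ℂ) :=
    Finset.prod_congr rfl fun i _ => walshCoeff_zero (hxm i).1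
  show (discrepancy d (b ^ n) (digitalNet Cm) x : ℂ)
      = ∑ t ∈ pif.filter (fun t => InDual Cm t ∧ t ≠ 0), ∏ i, walshCoeff b (t i) (x i)
  rw [hsplit, hAeq, hzero, discrepancy]
  push_cast
  ring
end
end

section
/- Fix an integer b ≥ 2 and a dimension d ≥ 1, and let f(x) = x₁·x₂·⋯·x_d for x = (x₁,…,x_d) ∈ [0,1)^d. There exists a constant C = C(b,d) > 0 such that for all j ∈ ℕ₋₁^d, m ∈ 𝔻_j and l ∈ 𝔹_j, the b-adic Haar coefficient satisfies |⟨f, h_{j,m,l}⟩| ≤ C · b^{−2|j|₊}. -/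
open MeasureTheory Finset
open scoped BigOperators Classical

noncomputable section

namespace HaarAux
open DigitalNets

def E (b l : ℕ) (k : ℕ) : ℂ :=
  Complex.exp (((-(2 * Real.pi * l * k / b) : ℝ) : ℂ) * Complex.I)

lemma haar1_pointwise (b : ℕ) (hb : 2 ≤ b) (j m l : ℕ) (hm : m < b ^ j) (x : ℝ) :
    (x:ℂ) * (starRingEnd ℂ) (haar1 b (j:ℤ) m l x)
      = ∑ k ∈ Finset.range b, Set.indicator
          (Set.Ico (((b:ℝ)^j)⁻¹ * m + ((b:ℝ)^(j+1))⁻¹ * k)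
                   (((b:ℝ)^j)⁻¹ * m + ((b:ℝ)^(j+1))⁻¹ * (k+1)))
          (fun y => (y:ℂ) * E b l k) x := by
  have hb0 : (0:ℝ) < b := by exact_mod_cast (by omega : 0 < b)
  set L : ℝ := ((b:ℝ)^j)⁻¹ * m with hL
  set c : ℝ := ((b:ℝ)^(j+1))⁻¹ with hc
  have hcpos : 0 < c := by rw [hc]; positivity
  have hcb : c * b = ((b:ℝ)^j)⁻¹ := by
    rw [hc, pow_succ]
    field_simp
  have hjne : (j:ℤ) ≠ -1 := by omega
  rw [haar1, if_neg hjne]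
  have hzp : (b:ℝ) ^ (-(j:ℤ)) = ((b:ℝ)^j)⁻¹ := by
    rw [zpow_neg, zpow_natCast]
  by_cases hx : x ∈ Set.Ico ((b:ℝ) ^ (-(j:ℤ)) * (m:ℝ)) ((b:ℝ) ^ (-(j:ℤ)) * ((m:ℝ) + 1))
  · -- in the big interval
    rw [if_pos hx, hzp] at *
    have hx1 : L ≤ x := hx.1
    have hx2 : x < L + c * b := by
      have := hx.2
      rw [mul_add, mul_one, ← hL] at this
      rw [hcb]
      linarith
    set y : ℝ := (x - L) / c with hy
    have hy0 : 0 ≤ y := div_nonneg (by linarith) hcpos.le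
    have hyb : y < b := by
      rw [hy, div_lt_iff₀ hcpos]
      nlinarith
    set k0 : ℕ := ⌊y⌋.toNat with hk0
    have hfl0 : (⌊y⌋ : ℝ) = (k0 : ℝ) := by
      rw [hk0]
      norm_cast
      exact (Int.toNat_of_nonneg (Int.floor_nonneg.mpr hy0)).symm
    have hk0le : (k0:ℝ) ≤ y := by rw [← hfl0]; exact Int.floor_le y
    have hk0lt : y < (k0:ℝ) + 1 := by rw [← hfl0]; exact Int.lt_floor_add_one y
    have hk0b : k0 < b := by exact_mod_cast hk0le.trans_lt hyb
    have hxk0 : x ∈ Set.Ico (L + c*(k0:ℝ)) (L + c*((k0:ℝ)+1)) := by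
      constructor
      · have : c * k0 ≤ x - L := by
          rw [hy] at hk0le
          calc c * (k0:ℝ) ≤ c * y := by nlinarith
          _ = x - L := by rw [hy]; field_simp
        linarith
      · have : x - L < c * ((k0:ℝ)+1) := by
          have : y < (k0:ℝ) + 1 := hk0lt
          rw [hy, div_lt_iff₀ hcpos] at this
          linarith [this]
        linarith
    have hbj1 : (b:ℝ)^((j:ℤ)+1) = c⁻¹ := by
      have : ((j:ℤ)+1) = ((j+1 : ℕ) : ℤ) := by push_cast; ring
      rw [this, zpow_natCast, hc, inv_inv]
    have hxc : (b:ℝ)^((j:ℤ)+1) * x = y + (b:ℝ)*m := by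
      rw [hbj1, hy, hL, hc]
      field_simp
      ring
    have hfl : ⌊(b:ℝ)^((j:ℤ)+1) * x⌋ = (k0 : ℤ) + b*m := by
      rw [hxc, Int.floor_eq_iff]
      constructor
      · push_cast; linarith
      · push_cast; linarith
    have hmod : (⌊(b:ℝ)^((j:ℤ)+1) * x⌋ % (b:ℤ)) = (k0 : ℤ) := by
      rw [hfl, Int.add_mul_emod_self_left, Int.emod_eq_of_lt (by positivity) (by exact_mod_cast hk0b)]
    rw [hmod]
    rw [Finset.sum_eq_single_of_mem k0 (Finset.mem_range.mpr hk0b)]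
    · rw [Set.indicator_of_mem hxk0]
      congr 1
      rw [← Complex.exp_conj]
      · congr 1
        simp only [map_div₀, map_mul, Complex.conj_I, map_ofNat, map_natCast, map_intCast,
          Complex.conj_ofReal]
        push_cast
        ring
    · intro k hk hkne
      apply Set.indicator_of_notMem
      intro hmem
      rcases lt_or_gt_of_ne hkne with h | h
      · have hkk : (k:ℝ) + 1 ≤ (k0:ℝ) := by exact_mod_cast h
        have := hmem.2
        have := hxk0.1
        nlinarith
      · have hkk : (k0:ℝ) + 1 ≤ (k:ℝ) := by exact_mod_cast h
        have := hmem.1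
        have := hxk0.2
        nlinarith
  · rw [if_neg hx, map_zero, mul_zero]
    symm
    apply Finset.sum_eq_zero
    intro k hk
    apply Set.indicator_of_notMem
    intro hxk
    apply hx
    rw [hzp]
    have hkb : (k:ℝ) + 1 ≤ (b:ℝ) := by exact_mod_cast Finset.mem_range.mp hk
    constructor
    · have := hxk.1
      have hck : 0 ≤ c * k := by positivity
      simp only [← hL]
      linarith
    · have := hxk.2
      have : x < L + c * ((k:ℝ)+1) := this
      have hle : c * ((k:ℝ)+1) ≤ c * b := by nlinarith
      have : x < L + c*b := by linarith
      rw [mul_add, mul_one, ← hL, ← hcb]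
      linarith

lemma E_abs (b l k : ℕ) : ‖E b l k‖ = 1 := Complex.norm_exp_ofReal_mul_I _

lemma E_pow (b l k : ℕ) : E b l k = (E b l 1) ^ k := by
  rw [E, E, ← Complex.exp_nat_mul]
  congr 1
  push_cast
  ring

lemma sum_E (b l : ℕ) (hb : 2 ≤ b) (hl1 : 1 ≤ l) (hlb : l < b) :
    ∑ k ∈ Finset.range b, E b l k = 0 := by
  have hbC : (b:ℂ) ≠ 0 := by exact_mod_cast (by omega : b ≠ 0)
  have hpi : (2 : ℂ) * Real.pi * Complex.I ≠ 0 := by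
    simp [Real.pi_ne_zero, Complex.I_ne_zero]
  have hz1 : E b l 1 ≠ 1 := by
    rw [E, Ne, Complex.exp_eq_one_iff]
    push_neg
    intro n h
    have h2 : (-(l:ℂ)) = n * b := by
      push_cast at h
      field_simp at h
      refine mul_right_cancel₀ hpi ?_
      linear_combination (2 * (Real.pi:ℂ) * Complex.I) * h
    have h3 : (-(l:ℤ) : ℂ) = ((n * b : ℤ) : ℂ) := by push_cast; exact_mod_cast h2
    have h4 : -(l:ℤ) = n * b := by exact_mod_cast h3
    have h5 : (b:ℤ) ∣ (l:ℤ) := ⟨-n, by linarith⟩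
    have := Int.le_of_dvd (by exact_mod_cast hl1) h5
    omega
  have hzb : (E b l 1) ^ b = 1 := by
    rw [← E_pow, E, Complex.exp_eq_one_iff]
    use -l
    field_simp
    push_cast
    ring
  have hsum : ∑ k ∈ Finset.range b, E b l k = ∑ k ∈ Finset.range b, (E b l 1)^k :=
    Finset.sum_congr rfl fun k _ => E_pow b l k
  rw [hsum, geom_sum_eq hz1, hzb]
  simp

lemma key1 (b : ℕ) (hb : 2 ≤ b) (j m l : ℕ) (hm : m < b ^ j) (hl1 : 1 ≤ l) (hlb : l < b) :
    ‖∫ x in Set.Ico (0:ℝ) 1, (x:ℂ) * (starRingEnd ℂ) (haar1 b (j:ℤ) m l x)‖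
      ≤ ((b:ℝ) ^ (2*j))⁻¹ := by
  have hb0 : (0:ℝ) < b := by exact_mod_cast (by omega : 0 < b)
  set L : ℝ := ((b:ℝ)^j)⁻¹ * m with hL
  set c : ℝ := ((b:ℝ)^(j+1))⁻¹ with hc
  have hcpos : 0 < c := by rw [hc]; positivity
  have hcb : c * b = ((b:ℝ)^j)⁻¹ := by
    rw [hc, pow_succ]; field_simp
  have hL0 : 0 ≤ L := by rw [hL]; positivity
  have hbj : (0:ℝ) < (b:ℝ)^j := by positivity
  have hLcb : L + c*b ≤ 1 := by
    have hm1 : (m:ℝ) + 1 ≤ (b:ℝ)^j := by exact_mod_cast hm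
    rw [hcb, hL]
    calc ((b:ℝ)^j)⁻¹ * m + ((b:ℝ)^j)⁻¹ = ((b:ℝ)^j)⁻¹ * ((m:ℝ)+1) := by ring
      _ ≤ ((b:ℝ)^j)⁻¹ * ((b:ℝ)^j) := by
          apply mul_le_mul_of_nonneg_left hm1 (by positivity)
      _ = 1 := inv_mul_cancel₀ (ne_of_gt hbj)
  have hint : ∀ k ∈ Finset.range b, Integrable
      (Set.indicator (Set.Ico (L + c*(k:ℝ)) (L + c*((k:ℝ)+1))) (fun y => (y:ℂ) * E b l k))
      (volume.restrict (Set.Ico (0:ℝ) 1)) := by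
    intro k _
    exact (((Complex.continuous_ofReal.mul continuous_const).integrableOn_Icc).mono_set
      Set.Ico_subset_Icc_self).indicator measurableSet_Ico
  have h1 : (∫ x in Set.Ico (0:ℝ) 1, (x:ℂ) * (starRingEnd ℂ) (haar1 b (j:ℤ) m l x))
      = ∑ k ∈ Finset.range b, ∫ x in Set.Ico (0:ℝ) 1,
          Set.indicator (Set.Ico (L + c*(k:ℝ)) (L + c*((k:ℝ)+1))) (fun y => (y:ℂ) * E b l k) x := by
    rw [← integral_finset_sum _ hint]
    simp only [haar1_pointwise b hb j m l hm, hL, hc]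
  rw [h1]
  have h2 : ∀ k ∈ Finset.range b, (∫ x in Set.Ico (0:ℝ) 1,
        Set.indicator (Set.Ico (L + c*(k:ℝ)) (L + c*((k:ℝ)+1))) (fun y => (y:ℂ) * E b l k) x)
      = ((((L + c*((k:ℝ)+1))^2 - (L + c*(k:ℝ))^2)/2 : ℝ) : ℂ) * E b l k := by
    intro k hk
    have hkb : (k:ℝ) + 1 ≤ (b:ℝ) := by exact_mod_cast Finset.mem_range.mp hk
    have hsub : Set.Ico (L + c*(k:ℝ)) (L + c*((k:ℝ)+1)) ⊆ Set.Ico (0:ℝ) 1 := by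
      apply Set.Ico_subset_Ico
      · positivity
      · nlinarith
    rw [setIntegral_indicator measurableSet_Ico,
      Set.inter_eq_self_of_subset_right hsub, integral_mul_const]
    congr 1
    rw [show (∫ a in Set.Ico (L + c*(k:ℝ)) (L + c*((k:ℝ)+1)), ((a:ℝ):ℂ))
        = ((∫ a in Set.Ico (L + c*(k:ℝ)) (L + c*((k:ℝ)+1)), a : ℝ) : ℂ) from integral_ofReal]
    congr 1
    rw [integral_Ico_eq_integral_Ioo, ← integral_Ioc_eq_integral_Ioo,
      ← intervalIntegral.integral_of_le (by nlinarith),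
      integral_id]
  rw [Finset.sum_congr rfl h2]
  have h0 := sum_E b l hb hl1 hlb
  have hsplit : ∑ k ∈ Finset.range b,
        ((((L + c*((k:ℝ)+1))^2 - (L + c*(k:ℝ))^2)/2 : ℝ) : ℂ) * E b l k
      = ∑ k ∈ Finset.range b, ((c^2 * (k:ℝ) : ℝ) : ℂ) * E b l k := by
    calc ∑ k ∈ Finset.range b, ((((L + c*((k:ℝ)+1))^2 - (L + c*(k:ℝ))^2)/2 : ℝ) : ℂ) * E b l k
        = ∑ k ∈ Finset.range b, (((c^2 * (k:ℝ) : ℝ) : ℂ) * E b l k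
            + ((c*L + c^2/2 : ℝ) : ℂ) * E b l k) := by
          refine Finset.sum_congr rfl fun k _ => ?_
          rw [← add_mul]
          congr 1
          push_cast
          ring
      _ = _ := by
          rw [Finset.sum_add_distrib, ← Finset.mul_sum, h0, mul_zero, add_zero]
  rw [hsplit]
  calc ‖∑ k ∈ Finset.range b, ((c^2 * (k:ℝ) : ℝ) : ℂ) * E b l k‖
      ≤ ∑ k ∈ Finset.range b, ‖((c^2 * (k:ℝ) : ℝ) : ℂ) * E b l k‖ := by
        exact norm_sum_le _ _
    _ = ∑ k ∈ Finset.range b, c^2 * (k:ℝ) := by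
        refine Finset.sum_congr rfl fun k _ => ?_
        rw [norm_mul, E_abs, mul_one, Complex.norm_real, Real.norm_eq_abs, abs_of_nonneg (by positivity)]
    _ ≤ ∑ k ∈ Finset.range b, c^2 * (b:ℝ) := by
        refine Finset.sum_le_sum fun k hk => ?_
        have : (k:ℝ) ≤ b := by exact_mod_cast (Finset.mem_range.mp hk).le
        nlinarith
    _ = (b:ℝ) * (c^2 * b) := by rw [Finset.sum_const, Finset.card_range]; simp
    _ = ((b:ℝ) ^ (2*j))⁻¹ := by
        rw [hc]
        have hexp : ((b:ℝ)^(j+1))^2 = (b:ℝ)^(2*j) * (b:ℝ)^2 := by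
          rw [← pow_mul, show (j+1)*2 = 2*j+2 from by ring, pow_add]
        field_simp [hexp]
        ring

lemma keyNeg (b : ℕ) (m l : ℕ) :
    ‖∫ x in Set.Ico (0:ℝ) 1, (x:ℂ) * (starRingEnd ℂ) (haar1 b (-1) m l x)‖ ≤ 1 := by
  have h : ∀ᵐ (x : ℝ) ∂(volume.restrict (Set.Ico (0:ℝ) 1)),
      ‖(x:ℂ) * (starRingEnd ℂ) (haar1 b (-1) m l x)‖ ≤ 1 := by
    filter_upwards [ae_restrict_mem measurableSet_Ico] with x hx
    rw [haar1, if_pos rfl, if_pos hx]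
    simp only [map_one, mul_one, Complex.norm_real, Real.norm_eq_abs]
    rw [abs_of_nonneg hx.1]
    exact le_of_lt hx.2
  have hle := norm_setIntegral_le_of_norm_le_const_ae
    (by simp [Real.volume_Ico] : volume (Set.Ico (0:ℝ) 1) < ⊤) h
  rw [Real.volume_real_Ico] at hle
  simpa using hle

end HaarAux


open DigitalNets in
/-- Lemma 5.3: the `b`-adic Haar coefficients of
`f(x) = x₁⋯x_d` satisfy `|⟨f,h_{j,m,l}⟩| ≤ C b^{−2|j|₊}`. -/
theorem haarCoeff_prod_le (b d : ℕ) (hb : 2 ≤ b) (hd : 1 ≤ d) :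
    ∃ C : ℝ, 0 < C ∧ ∀ (jr : Fin d → ℕ) (m : (i : Fin d) → Fin (b ^ (jr i - 1)))
      (l : Fin d → ℕ), validL b jr l →
      ‖innerCube d (fun x => ∏ i, (x i : ℂ))
          (haar b d (level jr) (fun i => (m i : ℕ)) l)‖
        ≤ C * ((b : ℝ) ^ (2 * levelSum jr))⁻¹ := by
  refine ⟨1, one_pos, ?_⟩
  intro jr m l hl
  have key : ∀ i : Fin d, ‖∫ x in Set.Ico (0:ℝ) 1,
      (x:ℂ) * (starRingEnd ℂ) (haar1 b (level jr i) (m i) (l i) x)‖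
      ≤ ((b:ℝ) ^ (2*(jr i - 1)))⁻¹ := by
    intro i
    have hli := hl i
    by_cases h0 : jr i = 0
    · rw [if_pos h0] at hli
      have hlv : level jr i = -1 := by simp [level, h0]
      rw [hlv]
      have hbd : (((b:ℝ)) ^ (2*(jr i - 1)))⁻¹ = 1 := by rw [h0]; norm_num
      rw [hbd]
      exact HaarAux.keyNeg b (m i) (l i)
    · rw [if_neg h0] at hli
      have hj : level jr i = ((jr i - 1 : ℕ) : ℤ) := by
        simp only [level]
        omega
      rw [hj]
      exact HaarAux.key1 b hb (jr i - 1) (m i) (l i) (m i).isLt hli.1 hli.2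
  have hfub : innerCube d (fun x => ∏ i, ((x i : ℝ):ℂ))
        (haar b d (level jr) (fun i => (m i:ℕ)) l)
      = ∏ i, ∫ x in Set.Ico (0:ℝ) 1,
          (x:ℂ) * (starRingEnd ℂ) (haar1 b (level jr i) (m i) (l i) x) := by
    unfold innerCube haar
    have hmeas : MeasurableSet (unitCube d) :=
      MeasurableSet.univ_pi fun i => measurableSet_Ico
    rw [← MeasureTheory.integral_indicator hmeas]
    have hptw : ∀ x : Fin d → ℝ, (unitCube d).indicator
        (fun x => (∏ i, ((x i : ℝ):ℂ)) *
          (starRingEnd ℂ) (∏ i, haar1 b (level jr i) (m i) (l i) (x i))) x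
        = ∏ i, (Set.Ico (0:ℝ) 1).indicator
            (fun t => (t:ℂ) * (starRingEnd ℂ) (haar1 b (level jr i) (m i) (l i) t)) (x i) := by
      intro x
      by_cases hx : x ∈ unitCube d
      · rw [Set.indicator_of_mem hx, map_prod, ← Finset.prod_mul_distrib]
        have hx' : ∀ i, x i ∈ Set.Ico (0:ℝ) 1 := by
          intro i
          exact hx i (Set.mem_univ i)
        exact Finset.prod_congr rfl fun i _ =>
          (Set.indicator_of_mem (hx' i)
            (fun t => (t:ℂ) * (starRingEnd ℂ) (haar1 b (level jr i) (m i) (l i) t))).symm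
      · rw [Set.indicator_of_notMem hx]
        symm
        obtain ⟨i, hi⟩ : ∃ i, x i ∉ Set.Ico (0:ℝ) 1 := by
          by_contra hcon
          push_neg at hcon
          exact hx fun i _ => hcon i
        exact Finset.prod_eq_zero (Finset.mem_univ i) (Set.indicator_of_notMem hi _)
    simp_rw [hptw]
    rw [MeasureTheory.integral_fintype_prod_volume_eq_prod (ι := Fin d)
      (fun i => (Set.Ico (0:ℝ) 1).indicator
        (fun t => (t:ℂ) * (starRingEnd ℂ) (haar1 b (level jr i) (m i) (l i) t)))]
    exact Finset.prod_congr rfl fun i _ =>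
      MeasureTheory.integral_indicator measurableSet_Ico
  rw [hfub, norm_prod, one_mul]
  calc ∏ i, ‖∫ x in Set.Ico (0:ℝ) 1,
        (x:ℂ) * (starRingEnd ℂ) (haar1 b (level jr i) (m i) (l i) x)‖
      ≤ ∏ i, ((b:ℝ) ^ (2*(jr i - 1)))⁻¹ :=
        Finset.prod_le_prod (fun i _ => norm_nonneg _) (fun i _ => key i)
    _ = ((b:ℝ) ^ (2 * levelSum jr))⁻¹ := by
        rw [Finset.prod_inv_distrib, Finset.prod_pow_eq_pow_sum, levelSum, Finset.mul_sum]
end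
end

section
/- Fix an integer b ≥ 2 and a dimension d ≥ 1. There exists a constant C = C(b,d) > 0 such that for all j ∈ ℕ₋₁^d, m ∈ 𝔻_j, l ∈ 𝔹_j and α ∈ ℕ₀^d: |⟨h_{j,m,l}, wal_α⟩| ≤ C · b^{−|j|₊}; moreover, if ρ₁(α_i) ≠ j_i + 1 for some 1 ≤ i ≤ d, then ⟨h_{j,m,l}, wal_α⟩ = 0. -/
open MeasureTheory Finset
open scoped BigOperators Classical

noncomputable section

namespace HWaux
open DigitalNets Complex

lemma floor_digit {b : ℕ} (hb : 2 ≤ b) {n e r : ℕ} (he : e ≤ n) {x : ℝ}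
    (hx : x ∈ Set.Ico ((r : ℝ) / (b:ℝ)^n) (((r : ℝ)+1) / (b:ℝ)^n)) :
    ⌊(b:ℝ)^e * x⌋ = ((r / b^(n-e) : ℕ) : ℤ) := by
  have hb0 : (0:ℝ) < (b:ℝ) := by positivity
  have hbn : (0:ℝ) < (b:ℝ)^n := by positivity
  have hbe : (0:ℝ) < (b:ℝ)^e := by positivity
  have hbt : (0:ℝ) < (b:ℝ)^(n-e) := by positivity
  have hbt' : (0:ℕ) < b^(n-e) := by positivity
  set t := n - e with ht
  have hent : e + t = n := by omega
  set q := r / b^t with hq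
  rw [Int.floor_eq_iff]
  constructor
  · have h1 : (q : ℝ) * (b:ℝ)^t ≤ r := by
      have := Nat.div_mul_le_self r (b^t)
      exact_mod_cast this
    have h2 : (q : ℝ) ≤ (r:ℝ) / (b:ℝ)^t := by
      rw [le_div_iff₀ hbt]; exact h1
    calc ((q:ℕ):ℝ) ≤ (r:ℝ) / (b:ℝ)^t := h2
      _ = (b:ℝ)^e * ((r:ℝ) / (b:ℝ)^n) := by
          rw [← hent, pow_add]; field_simp
      _ ≤ (b:ℝ)^e * x := mul_le_mul_of_nonneg_left hx.1 (le_of_lt hbe)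
  · have h1 : r < (q+1) * b^t := by
      have : r / b^t < q + 1 := by omega
      exact Nat.lt_mul_of_div_lt this hbt'
    have h2 : (r:ℝ) + 1 ≤ ((q:ℝ)+1) * (b:ℝ)^t := by
      have : (r:ℝ) + 1 ≤ ((q+1) * b^t : ℕ) := by exact_mod_cast h1
      simpa using this
    calc (b:ℝ)^e * x < (b:ℝ)^e * (((r:ℝ)+1) / (b:ℝ)^n) :=
          mul_lt_mul_of_pos_left hx.2 hbe
      _ ≤ (q:ℝ) + 1 := by
          rw [← hent, pow_add]
          have hne : ((b:ℝ)^e) ≠ 0 := ne_of_gt hbe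
          have hnt : ((b:ℝ)^t) ≠ 0 := ne_of_gt hbt
          rw [mul_comm ((b:ℝ)^e) ((b:ℝ)^t), div_mul_eq_div_div,
            mul_comm, div_mul_cancel₀ _ hne, div_le_iff₀ hbt]
          linarith

lemma mem_Ico_iff_floor {b n : ℕ} (hb : 2 ≤ b) (r : ℕ) (x : ℝ) :
    x ∈ Set.Ico ((r : ℝ) / (b:ℝ)^n) (((r : ℝ)+1) / (b:ℝ)^n) ↔ ⌊(b:ℝ)^n * x⌋ = (r:ℤ) := by
  have hbn : (0:ℝ) < (b:ℝ)^n := by positivity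
  rw [Int.floor_eq_iff, Set.mem_Ico, div_le_iff₀ hbn, lt_div_iff₀ hbn]
  constructor
  · rintro ⟨h1, h2⟩
    exact ⟨by push_cast; linarith [h1], by push_cast; linarith [h2]⟩
  · rintro ⟨h1, h2⟩
    constructor
    · push_cast at h1 ⊢; linarith
    · push_cast at h2 ⊢; linarith

lemma step_integrable_and_integral {b n : ℕ} (hb : 2 ≤ b) (c : ℕ → ℂ) (F : ℝ → ℂ)
    (hF : ∀ r < b^n, ∀ x ∈ Set.Ico ((r:ℝ)/(b:ℝ)^n) (((r:ℝ)+1)/(b:ℝ)^n), F x = c r) :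
    MeasureTheory.IntegrableOn F (Set.Ico (0:ℝ) 1) ∧
      ∫ x in Set.Ico (0:ℝ) 1, F x = ((b:ℝ)^n)⁻¹ • ∑ r ∈ range (b^n), c r := by
  have hb0 : (0:ℝ) < (b:ℝ) := by positivity
  have hbn : (0:ℝ) < (b:ℝ)^n := by positivity
  have hbn' : (0:ℕ) < b^n := by positivity
  set S : ℕ → Set ℝ := fun r => Set.Ico ((r:ℝ)/(b:ℝ)^n) (((r:ℝ)+1)/(b:ℝ)^n) with hS
  set g : ℝ → ℂ := fun x => ∑ r ∈ range (b^n), Set.indicator (S r) (fun _ => c r) x with hg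
  have hsub : ∀ r < b^n, S r ⊆ Set.Ico (0:ℝ) 1 := by
    intro r hr y hy
    obtain ⟨h1, h2⟩ := hy
    constructor
    · have : (0:ℝ) ≤ (r:ℝ)/(b:ℝ)^n := by positivity
      linarith
    · have hr1 : ((r:ℝ)+1) ≤ (b:ℝ)^n := by
        have : (r+1 : ℕ) ≤ b^n := hr
        push_cast at this ⊢
        convert this using 1 <;> norm_cast
      calc y < ((r:ℝ)+1)/(b:ℝ)^n := h2
        _ ≤ 1 := by rw [div_le_one hbn]; exact hr1
  have hEq : Set.EqOn F g (Set.Ico (0:ℝ) 1) := by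
    intro x hx
    have hx0 : (0:ℝ) ≤ (b:ℝ)^n * x := by
      have := hx.1; positivity
    set r : ℕ := (⌊(b:ℝ)^n * x⌋).toNat with hr
    have hfl : ⌊(b:ℝ)^n * x⌋ = (r:ℤ) := by
      rw [hr, Int.toNat_of_nonneg (Int.floor_nonneg.2 hx0)]
    have hrlt : r < b^n := by
      have h2 : (b:ℝ)^n * x < (b:ℝ)^n := by
        calc (b:ℝ)^n * x < (b:ℝ)^n * 1 := mul_lt_mul_of_pos_left hx.2 hbn
          _ = (b:ℝ)^n := mul_one _
      have h3 : ((r:ℤ):ℝ) < (b:ℝ)^n := lt_of_le_of_lt (by rw [← hfl]; exact Int.floor_le _) h2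
      have : ((r:ℝ)) < ((b^n : ℕ) : ℝ) := by push_cast at h3 ⊢; exact h3
      exact_mod_cast this
    have hmem : x ∈ S r := (mem_Ico_iff_floor hb r x).2 hfl
    have : g x = c r := by
      rw [hg]
      simp only []
      rw [Finset.sum_eq_single r]
      · rw [Set.indicator_of_mem hmem]
      · intro r' _ hne
        rw [Set.indicator_of_notMem]
        intro hmem'
        exact hne (by exact_mod_cast ((mem_Ico_iff_floor hb r' x).1 hmem').symm.trans hfl)
      · intro habs
        exact absurd (Finset.mem_range.2 hrlt) habs
    rw [this]
    exact hF r hrlt x hmem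
  have hSmeas : ∀ r : ℕ, MeasurableSet (S r) := fun r => measurableSet_Ico
  have hind : ∀ r : ℕ, MeasureTheory.Integrable (Set.indicator (S r) (fun _ => c r)) := by
    intro r
    refine (MeasureTheory.integrable_indicator_iff (hSmeas r)).2 ?_
    exact MeasureTheory.integrableOn_const (by simp [hS, Real.volume_Ico])
  have hgint : MeasureTheory.Integrable g := MeasureTheory.integrable_finset_sum _ (fun r _ => hind r)
  have hFint : MeasureTheory.IntegrableOn F (Set.Ico (0:ℝ) 1) :=
    (hgint.integrableOn.congr_fun (fun x hx => (hEq hx).symm) measurableSet_Ico)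
  refine ⟨hFint, ?_⟩
  rw [MeasureTheory.setIntegral_congr_fun measurableSet_Ico hEq]
  rw [hg]
  rw [MeasureTheory.integral_finset_sum _ (fun r _ => (hind r).integrableOn)]
  have hvol : ∀ r, r < b^n → ∫ x in Set.Ico (0:ℝ) 1, Set.indicator (S r) (fun _ => c r) x
      = ((b:ℝ)^n)⁻¹ • c r := by
    intro r hr
    rw [MeasureTheory.integral_indicator (hSmeas r)]
    rw [MeasureTheory.Measure.restrict_restrict (hSmeas r)]
    rw [Set.inter_eq_left.2 (hsub r hr)]
    rw [MeasureTheory.setIntegral_const]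
    congr 1
    rw [hS]
    simp only [Real.volume_Ico]
    have : ((r:ℝ)+1)/(b:ℝ)^n - (r:ℝ)/(b:ℝ)^n = ((b:ℝ)^n)⁻¹ := by
      field_simp
      ring
    rw [MeasureTheory.measureReal_def, Real.volume_Ico, this, ENNReal.toReal_ofReal (by positivity)]
  rw [Finset.sum_congr rfl (fun r hr => hvol r (Finset.mem_range.1 hr))]
  rw [Finset.smul_sum]

lemma char_sum {b : ℕ} (hb : 2 ≤ b) {c : ℤ} (hc : ¬ ((b:ℤ) ∣ c)) :
    ∑ k ∈ range b, (Complex.exp (2 * (Real.pi:ℂ) * Complex.I * (c:ℂ) / (b:ℂ)))^k = 0 := by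
  have hbne : ((b:ℂ)) ≠ 0 := by
    simp only [ne_eq, Nat.cast_eq_zero]; omega
  set w : ℂ := Complex.exp (2 * (Real.pi:ℂ) * Complex.I * (c:ℂ) / (b:ℂ)) with hw
  have hw1 : w ≠ 1 := by
    intro h
    rw [hw, Complex.exp_eq_one_iff] at h
    obtain ⟨k, hk⟩ := h
    apply hc
    have hI : (2 * (Real.pi:ℂ) * Complex.I) ≠ 0 := by
      simp [Complex.I_ne_zero, Real.pi_ne_zero, Complex.ofReal_eq_zero]
    have : (c:ℂ) = (k:ℂ) * (b:ℂ) := by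
      field_simp at hk
      have h2 : (2 * (Real.pi:ℂ) * Complex.I) * (c:ℂ) = (2 * (Real.pi:ℂ) * Complex.I) * ((k:ℂ) * (b:ℂ)) := by
        ring_nf
        ring_nf at hk
        linear_combination (2 * (Real.pi:ℂ) * Complex.I) * hk
      exact mul_left_cancel₀ hI h2
    have : c = k * b := by exact_mod_cast this
    exact ⟨k, by linarith⟩
  have hwb : w ^ b = 1 := by
    rw [hw, ← Complex.exp_nat_mul]
    have : (b:ℂ) * (2 * (Real.pi:ℂ) * Complex.I * (c:ℂ) / (b:ℂ)) = (c:ℂ) * (2 * (Real.pi:ℂ) * Complex.I) := by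
      field_simp
    rw [this]
    exact_mod_cast Complex.exp_int_mul_two_pi_mul_I c
  have := geom_sum_eq hw1 b
  rw [this, hwb]
  simp

lemma sum_base_split {b n : ℕ} (hb : 2 ≤ b) (hn : 1 ≤ n) (f : ℕ → ℂ) :
    ∑ r ∈ range (b^n), f r = ∑ q ∈ range (b^(n-1)), ∑ k ∈ range b, f (b*q+k) := by
  have hb0 : 0 < b := by omega
  have hpow : b^(n-1) * b = b^n := by
    rw [← pow_succ]; congr 1; omega
  rw [← Finset.sum_product']
  apply Finset.sum_nbij' (i := fun r => (r / b, r % b)) (j := fun p => b * p.1 + p.2)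
  · intro r hr
    rw [Finset.mem_range] at hr
    rw [Finset.mem_product, Finset.mem_range, Finset.mem_range]
    constructor
    · rw [Nat.div_lt_iff_lt_mul hb0, hpow]; exact hr
    · exact Nat.mod_lt _ hb0
  · intro p hp
    rw [Finset.mem_product, Finset.mem_range, Finset.mem_range] at hp
    rw [Finset.mem_range]
    calc b * p.1 + p.2 < b * p.1 + b := by omega
      _ = b * (p.1 + 1) := by ring
      _ ≤ b * b^(n-1) := by
          apply Nat.mul_le_mul_left
          omega
      _ = b^n := by rw [mul_comm]; exact hpow
  · intro r _
    exact Nat.div_add_mod r b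
  · intro p hp
    rw [Finset.mem_product, Finset.mem_range, Finset.mem_range] at hp
    have h1 : (b * p.1 + p.2) / b = p.1 := by
      rw [Nat.mul_add_div hb0, Nat.div_eq_of_lt hp.2]
      omega
    have h2 : (b * p.1 + p.2) % b = p.2 := by
      rw [Nat.mul_add_mod, Nat.mod_eq_of_lt hp.2]
    exact Prod.ext h1 h2
  · intro r _
    exact congrArg f (Nat.div_add_mod r b).symm

lemma weight_one_zero (b : ℕ) : weight b 1 0 = 0 := by
  simp [weight, digitPositions]

lemma weight_one_eq_log {b : ℕ} (hb : 2 ≤ b) {α : ℕ} (hα : α ≠ 0) :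
    weight b 1 α = Nat.log b α + 1 := by
  have hb1 : 1 < b := hb
  set L := Nat.log b α with hL
  set P := digitPositions b α with hP
  have hd : (α / b^L) % b ≠ 0 := by
    have h1 : b^L ≤ α := Nat.pow_log_le_self b hα
    have h2 : α < b^(L+1) := Nat.lt_pow_succ_log_self hb1 α
    have hq1 : 1 ≤ α / b^L := (Nat.one_le_div_iff (by positivity)).2 h1
    have hq2 : α / b^L < b := by
      rw [Nat.div_lt_iff_lt_mul (by positivity : 0 < b^L)]
      calc α < b^(L+1) := h2
        _ = b * b^L := by rw [pow_succ, mul_comm]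
    rw [Nat.mod_eq_of_lt hq2]
    omega
  have hmem : L + 1 ∈ P := by
    rw [hP, digitPositions, Finset.mem_filter, Finset.mem_range]
    refine ⟨?_, by omega, by simpa using hd⟩
    have := Nat.log_lt_self b hα
    omega
  have hmax : ∀ a ∈ P, a ≤ L + 1 := by
    intro a ha
    rw [hP, digitPositions, Finset.mem_filter, Finset.mem_range] at ha
    by_contra hgt
    apply ha.2.2
    have : α < b^(a-1) := by
      calc α < b^(L+1) := Nat.lt_pow_succ_log_self hb1 α
        _ ≤ b^(a-1) := Nat.pow_le_pow_right (by omega) (by omega)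
    rw [Nat.div_eq_of_lt this]
    simp
  rw [weight]
  rw [Finset.sum_eq_single (L+1)]
  · rw [if_pos]
    rw [Finset.card_eq_zero.2]
    · omega
    · apply Finset.filter_false_of_mem
      intro a ha
      have := hmax a ha
      omega
  · intro a ha hne
    rw [if_neg]
    rw [not_lt, Nat.one_le_iff_ne_zero, ← Nat.pos_iff_ne_zero, Finset.card_pos]
    exact ⟨L+1, Finset.mem_filter.2 ⟨hmem, by have := hmax a ha; omega⟩⟩
  · intro h
    exact absurd hmem h

lemma Ico_subset_unit {b n : ℕ} (hb : 2 ≤ b) {r : ℕ} (hr : r < b^n) :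
    Set.Ico ((r:ℝ)/(b:ℝ)^n) (((r:ℝ)+1)/(b:ℝ)^n) ⊆ Set.Ico (0:ℝ) 1 := by
  have hbn : (0:ℝ) < (b:ℝ)^n := by positivity
  intro y hy
  obtain ⟨h1, h2⟩ := hy
  constructor
  · have : (0:ℝ) ≤ (r:ℝ)/(b:ℝ)^n := by positivity
    linarith
  · have hr1 : ((r:ℝ)+1) ≤ (b:ℝ)^n := by
      have : (r+1 : ℕ) ≤ b^n := hr
      have h3 : ((r+1:ℕ):ℝ) ≤ ((b^n:ℕ):ℝ) := by exact_mod_cast this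
      push_cast at h3
      exact h3
    calc y < ((r:ℝ)+1)/(b:ℝ)^n := h2
      _ ≤ 1 := by rw [div_le_one hbn]; exact hr1

lemma lt_pow_weight {b : ℕ} (hb : 2 ≤ b) (α : ℕ) : α < b ^ (weight b 1 α) := by
  rcases eq_or_ne α 0 with rfl | hα
  · simp [weight_one_zero]
  · rw [weight_one_eq_log hb hα]
    exact Nat.lt_pow_succ_log_self hb α

lemma digit_high_zero {b : ℕ} (hb : 2 ≤ b) (α a : ℕ) (ha : weight b 1 α ≤ a) :
    (α / b ^ a) % b = 0 := by
  have h1 : α < b ^ a := lt_of_lt_of_le (lt_pow_weight hb α) (Nat.pow_le_pow_right (by omega) ha)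
  rw [Nat.div_eq_of_lt h1]
  simp

lemma top_digit_ne_zero {b : ℕ} (hb : 2 ≤ b) {α : ℕ} (hα : α ≠ 0) :
    (α / b ^ (weight b 1 α - 1)) % b ≠ 0 := by
  rw [weight_one_eq_log hb hα]
  simp only [Nat.add_sub_cancel]
  set L := Nat.log b α with hL
  have h1 : b^L ≤ α := Nat.pow_log_le_self b hα
  have h2 : α < b^(L+1) := Nat.lt_pow_succ_log_self hb α
  have hq1 : 1 ≤ α / b ^ L := (Nat.one_le_div_iff (by positivity)).2 h1
  have hq2 : α / b ^ L < b := by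
    rw [Nat.div_lt_iff_lt_mul (by positivity : 0 < b^L)]
    calc α < b^(L+1) := h2
      _ = b * b^L := by rw [pow_succ, mul_comm]
  rw [Nat.mod_eq_of_lt hq2]
  omega

lemma walsh1_sum_ext {b : ℕ} (hb : 2 ≤ b) {α : ℕ} (f : ℕ → ℂ) {N : ℕ} (hN : α < b^N) :
    ∑ a ∈ range (α+1), (((α / b ^ a) % b : ℕ) : ℂ) * f a
      = ∑ a ∈ range N, (((α / b ^ a) % b : ℕ) : ℂ) * f a := by
  have key : ∀ M₁ M₂ : ℕ, M₁ ≤ M₂ → α < b^M₁ →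
      ∑ a ∈ range M₂, (((α / b ^ a) % b : ℕ) : ℂ) * f a
        = ∑ a ∈ range M₁, (((α / b ^ a) % b : ℕ) : ℂ) * f a := by
    intro M₁ M₂ hle hlt
    symm
    apply Finset.sum_subset (Finset.range_subset_range.2 hle)
    intro a _ ha
    rw [Finset.mem_range, not_lt] at ha
    have : α < b^a := lt_of_lt_of_le hlt (Nat.pow_le_pow_right (by omega) ha)
    rw [Nat.div_eq_of_lt this]
    simp
  have hα1 : α < b^(α+1) := by
    calc α < b^α := Nat.lt_pow_self hb
      _ ≤ b^(α+1) := Nat.pow_le_pow_right (by omega) (by omega)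
  rcases le_total (α+1) N with h | h
  · rw [← key (α+1) N h hα1]
  · rw [key N (α+1) h hN]

lemma walsh1_eq_of_lt {b : ℕ} (hb : 2 ≤ b) {α N : ℕ} (hN : α < b^N) (x : ℝ) :
    walsh1 b α x = Complex.exp (2 * (Real.pi:ℂ) * Complex.I / (b:ℂ) *
      ∑ a ∈ range N, (((α / b ^ a) % b : ℕ) : ℂ) * ((xdigit b a x : ℤ) : ℂ)) := by
  rw [walsh1]
  congr 2
  exact walsh1_sum_ext hb _ hN

lemma abs_exp_real_I (z : ℂ) (h : ∃ s : ℝ, z = (s:ℂ) * Complex.I) :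
    ‖Complex.exp z‖ = 1 := by
  obtain ⟨s, rfl⟩ := h
  exact Complex.norm_exp_ofReal_mul_I s

lemma mul_add_div_pow {b q k e : ℕ} (hb0 : 0 < b) (hk : k < b) (he : 1 ≤ e) :
    (b*q+k) / b^e = q / b^(e-1) := by
  rw [show e = 1 + (e-1) by omega, pow_add, pow_one, ← Nat.div_div_eq_div_mul,
    Nat.mul_add_div hb0, Nat.div_eq_of_lt hk]
  simp

lemma core1d {b : ℕ} (hb : 2 ≤ b) (jr m l α : ℕ) (hm : m < b^(jr-1))
    (hl : if jr = 0 then l = 1 else 1 ≤ l ∧ l < b) :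
    ‖∫ x in Set.Ico (0:ℝ) 1,
        haar1 b ((jr:ℤ)-1) m l x * (starRingEnd ℂ) (walsh1 b α x)‖ ≤ ((b:ℝ)^(jr-1))⁻¹ ∧
    (weight b 1 α ≠ jr →
      ∫ x in Set.Ico (0:ℝ) 1, haar1 b ((jr:ℤ)-1) m l x * (starRingEnd ℂ) (walsh1 b α x) = 0) := by
  have hb0 : 0 < b := by omega
  set W := weight b 1 α with hW
  set n := max (max jr W) 1 with hn
  have hn1 : 1 ≤ n := le_max_right _ _
  have hjrn : jr ≤ n := le_trans (le_max_left _ _) (le_max_left _ _)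
  have hWn : W ≤ n := le_trans (le_max_right _ _) (le_max_left _ _)
  have hαn : α < b^n := lt_of_lt_of_le (lt_pow_weight hb α) (Nat.pow_le_pow_right (by omega) hWn)
  set c : ℕ → ℂ := fun r =>
    (if jr = 0 then 1 else if r / b^(n-jr+1) = m then
        Complex.exp (2 * (Real.pi:ℂ) * Complex.I * (l:ℂ) *
          (((r / b^(n-jr)) % b : ℕ) : ℂ) / (b:ℂ))
      else 0)
    * (starRingEnd ℂ) (Complex.exp (2 * (Real.pi:ℂ) * Complex.I / (b:ℂ) *
        ∑ a ∈ range n, (((α / b ^ a) % b : ℕ) : ℂ) *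
          (((r / b^(n-(a+1))) % b : ℕ) : ℂ))) with hc
  have hstep : ∀ r, r < b^n → ∀ x ∈ Set.Ico ((r:ℝ)/(b:ℝ)^n) (((r:ℝ)+1)/(b:ℝ)^n),
      haar1 b ((jr:ℤ)-1) m l x * (starRingEnd ℂ) (walsh1 b α x) = c r := by
    intro r hr x hx
    have hxd : ∀ a : ℕ, a < n →
        ((xdigit b a x : ℤ) : ℂ) = (((r / b^(n-(a+1))) % b : ℕ) : ℂ) := by
      intro a ha
      rw [xdigit, floor_digit hb (show a+1 ≤ n by omega) hx]
      norm_cast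
    have hwal : walsh1 b α x = Complex.exp (2 * (Real.pi:ℂ) * Complex.I / (b:ℂ) *
        ∑ a ∈ range n, (((α / b ^ a) % b : ℕ) : ℂ) *
          (((r / b^(n-(a+1))) % b : ℕ) : ℂ)) := by
      rw [walsh1_eq_of_lt hb hαn x]
      congr 2
      apply Finset.sum_congr rfl
      intro a ha
      rw [Finset.mem_range] at ha
      rw [hxd a ha]
    rcases Nat.eq_zero_or_pos jr with hjr0 | hjrpos
    · subst hjr0
      rw [hwal, hc]
      simp only [if_pos rfl]
      rw [haar1, if_pos (by norm_num : ((0:ℕ):ℤ)-1 = -1),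
        if_pos (Ico_subset_unit hb hr hx)]
      simp
    · have hne : ((jr:ℤ)-1) ≠ -1 := by omega
      have hjrne : ¬ (jr = 0) := by omega
      rw [hwal, hc]
      simp only [if_neg hjrne]
      rw [haar1, if_neg hne]
      have hzpow : ((b:ℕ):ℝ)^(-((jr:ℤ)-1)) = ((b:ℝ)^(jr-1))⁻¹ := by
        rw [show -((jr:ℤ)-1) = -(((jr-1:ℕ)):ℤ) by omega, zpow_neg, zpow_natCast]
      have hzpow2 : ((b:ℕ):ℝ)^(((jr:ℤ)-1)+1) = (b:ℝ)^(jr:ℕ) := by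
        rw [show ((jr:ℤ)-1)+1 = ((jr:ℕ):ℤ) by omega, zpow_natCast]
      rw [hzpow, hzpow2]
      have hmem_iff : (x ∈ Set.Ico (((b:ℝ)^(jr-1))⁻¹ * (m:ℝ)) (((b:ℝ)^(jr-1))⁻¹ * ((m:ℝ)+1)))
          ↔ r / b^(n-jr+1) = m := by
        have e1 : ((b:ℝ)^(jr-1))⁻¹ * (m:ℝ) = (m:ℝ)/(b:ℝ)^(jr-1) := by ring
        have e2 : ((b:ℝ)^(jr-1))⁻¹ * ((m:ℝ)+1) = ((m:ℝ)+1)/(b:ℝ)^(jr-1) := by ring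
        rw [e1, e2, mem_Ico_iff_floor hb m x,
          floor_digit hb (show jr-1 ≤ n by omega) hx,
          show n - (jr-1) = n - jr + 1 by omega]
        exact Nat.cast_inj
      have hflr : ((⌊((b:ℕ):ℝ)^(jr:ℕ) * x⌋ % (b:ℤ) : ℤ) : ℂ)
          = (((r / b^(n-jr)) % b : ℕ) : ℂ) := by
        rw [floor_digit hb hjrn hx]
        norm_cast
      by_cases hcond : r / b^(n-jr+1) = m
      · rw [if_pos (hmem_iff.2 hcond), if_pos hcond, hflr]
      · rw [if_neg (fun h => hcond (hmem_iff.1 h)), if_neg hcond, zero_mul]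
  obtain ⟨hint, hval⟩ := step_integrable_and_integral hb c _ hstep
  have habs_wal : ∀ r : ℕ, ‖(starRingEnd ℂ) (Complex.exp (2 * (Real.pi:ℂ) * Complex.I / (b:ℂ) *
      ∑ a ∈ range n, (((α / b ^ a) % b : ℕ) : ℂ) *
        (((r / b^(n-(a+1))) % b : ℕ) : ℂ)))‖ = 1 := by
    intro r
    rw [Complex.norm_conj]
    apply abs_exp_real_I
    refine ⟨2 * Real.pi / (b:ℝ) * ∑ a ∈ range n, (((α / b ^ a) % b : ℕ) : ℝ) *
      (((r / b^(n-(a+1))) % b : ℕ) : ℝ), ?_⟩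
    push_cast
    ring
  have habs : ∀ r : ℕ, ‖c r‖ ≤
      (if jr = 0 then (1:ℝ) else if r / b^(n-jr+1) = m then 1 else 0) := by
    intro r
    rw [hc]
    simp only [map_mul, norm_mul]
    rw [habs_wal r, mul_one]
    rcases Nat.eq_zero_or_pos jr with hjr0 | hjrpos
    · simp [hjr0]
    · have hjrne : ¬ (jr = 0) := by omega
      rw [if_neg hjrne, if_neg hjrne]
      by_cases hcond : r / b^(n-jr+1) = m
      · rw [if_pos hcond, if_pos hcond]
        apply le_of_eq
        apply abs_exp_real_I
        refine ⟨2 * Real.pi * (l:ℝ) * (((r / b^(n-jr)) % b : ℕ) : ℝ) / (b:ℝ), ?_⟩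
        push_cast
        ring
      · rw [if_neg hcond, if_neg hcond]
        simp
  constructor
  · rw [hval, norm_smul, Real.norm_eq_abs,
      _root_.abs_of_nonneg (by positivity : (0:ℝ) ≤ ((b:ℝ)^n)⁻¹)]
    have hsum : ‖∑ r ∈ range (b^n), c r‖ ≤
        ∑ r ∈ range (b^n), (if jr = 0 then (1:ℝ) else if r / b^(n-jr+1) = m then 1 else 0) := by
      refine le_trans (norm_sum_le _ _) (Finset.sum_le_sum ?_)
      intro r _
      exact habs r
    rcases Nat.eq_zero_or_pos jr with hjr0 | hjrpos
    · have : ∑ r ∈ range (b^n), (if jr = 0 then (1:ℝ) else if r / b^(n-jr+1) = m then 1 else 0)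
          = (b^n : ℕ) := by
        simp [hjr0]
      rw [this] at hsum
      have h1 : ((b:ℝ)^n)⁻¹ * ‖∑ r ∈ range (b^n), c r‖ ≤ ((b:ℝ)^n)⁻¹ * (b^n:ℕ) := by
        apply mul_le_mul_of_nonneg_left hsum (by positivity)
      have h2 : ((b:ℝ)^n)⁻¹ * ((b^n:ℕ):ℝ) = 1 := by
        push_cast
        field_simp
      rw [h2] at h1
      rw [hjr0]
      simpa using h1
    · have hjrne : ¬ (jr = 0) := by omega
      set B := b^(n-jr+1) with hB
      have hfil : Finset.filter (fun r => r / B = m) (Finset.range (b^n))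
          = Finset.Ico (m * B) ((m+1) * B) := by
        ext r
        simp only [Finset.mem_filter, Finset.mem_range, Finset.mem_Ico]
        have hBpos : 0 < B := by positivity
        constructor
        · rintro ⟨hrlt, hdiv⟩
          have h3 := Nat.div_add_mod r B
          rw [hdiv] at h3
          have h4 : r % B < B := Nat.mod_lt _ hBpos
          constructor
          · calc m * B = B * m := mul_comm _ _
              _ ≤ B * m + r % B := Nat.le_add_right _ _
              _ = r := h3
          · calc r = B * m + r % B := h3.symm
              _ < B * m + B := by omega
              _ = (m+1) * B := by ring
        · rintro ⟨h1, h2⟩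
          have hdiv : r / B = m := by
            have hlo : m * B ≤ r := h1
            have hhi : r < (m+1) * B := h2
            have := Nat.div_add_mod r B
            have hmod : r % B < B := Nat.mod_lt _ hBpos
            nlinarith [Nat.div_add_mod r B, Nat.mod_lt r hBpos,
              Nat.div_mul_le_self r B]
          refine ⟨?_, hdiv⟩
          calc r < (m+1) * B := h2
            _ ≤ b^(jr-1) * B := Nat.mul_le_mul_right _ hm
            _ = b^n := by rw [hB, ← pow_add]; congr 1; omega
      have hsum2 : ∑ r ∈ range (b^n),
          (if jr = 0 then (1:ℝ) else if r / B = m then 1 else 0) = (B : ℝ) := by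
        simp only [if_neg hjrne]
        rw [Finset.sum_boole, hfil, Nat.card_Ico]
        congr 1
        have : (m+1) * B = m * B + B := by ring
        omega
      rw [hsum2] at hsum
      calc ((b:ℝ)^n)⁻¹ * ‖∑ r ∈ range (b^n), c r‖ ≤ ((b:ℝ)^n)⁻¹ * (B:ℝ) :=
            mul_le_mul_of_nonneg_left hsum (by positivity)
        _ = ((b:ℝ)^(jr-1))⁻¹ := by
            rw [hB]
            push_cast
            rw [show ((b:ℝ))^n = (b:ℝ)^(jr-1) * (b:ℝ)^(n-jr+1) by
              rw [← pow_add]; congr 1; omega]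
            have h1 : ((b:ℝ)^(jr-1)) ≠ 0 := by positivity
            have h2 : ((b:ℝ)^(n-jr+1)) ≠ 0 := by positivity
            field_simp
  · intro hWne
    rw [hval]
    have hzero : ∑ r ∈ range (b^n), c r = 0 := by
      rw [sum_base_split hb hn1]
      apply Finset.sum_eq_zero
      intro q _
      rcases lt_or_gt_of_ne hWne with hlt | hgt
      · -- W < jr, n = jr
        have hnjr : n = jr := by omega
        have hjrne : ¬ (jr = 0) := by omega
        have hsum_eq : ∀ k, k < b →
            (∑ a ∈ range n, (((α / b ^ a) % b : ℕ) : ℂ) *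
              ((((b*q+k) / b^(n-(a+1))) % b : ℕ) : ℂ))
            = (∑ a ∈ range n, (((α / b ^ a) % b : ℕ) : ℂ) *
              ((((b*q) / b^(n-(a+1))) % b : ℕ) : ℂ)) := by
          intro k hk
          apply Finset.sum_congr rfl
          intro a ha
          rw [Finset.mem_range] at ha
          rcases eq_or_ne a (n-1) with heq | hne
          · have hcz : (α / b ^ a) % b = 0 := digit_high_zero hb α a (by omega)
            rw [hcz]
            simp
          · have he : 1 ≤ n - (a+1) := by omega
            rw [mul_add_div_pow hb0 hk he,
              show (b*q) / b^(n-(a+1)) = q / b^(n-(a+1)-1) by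
                simpa using mul_add_div_pow (q := q) (k := 0) hb0 hb0 he]
        have hmain : ∀ k, k < b → c (b*q+k) =
            Complex.exp (2 * (Real.pi:ℂ) * Complex.I * (((l:ℤ)):ℂ) / (b:ℂ))^k *
              ((if q = m then (1:ℂ) else 0) *
                (starRingEnd ℂ) (Complex.exp (2 * (Real.pi:ℂ) * Complex.I / (b:ℂ) *
                  ∑ a ∈ range n, (((α / b ^ a) % b : ℕ) : ℂ) *
                    ((((b*q) / b^(n-(a+1))) % b : ℕ) : ℂ)))) := by
          intro k hk
          rw [hc]
          simp only [if_neg hjrne]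
          rw [hsum_eq k hk]
          have hdiv1 : (b*q+k) / b^(n-jr+1) = q := by
            rw [show n-jr+1 = 1 by omega, pow_one, Nat.mul_add_div hb0,
              Nat.div_eq_of_lt hk, add_zero]
          have hdig1 : ((b*q+k) / b^(n-jr)) % b = k := by
            rw [show n-jr = 0 by omega, pow_zero, Nat.div_one, Nat.mul_add_mod,
              Nat.mod_eq_of_lt hk]
          rw [hdiv1, hdig1]
          by_cases hqm : q = m
          · rw [if_pos hqm, if_pos hqm, one_mul]
            congr 1
            rw [← Complex.exp_nat_mul]
            congr 1
            push_cast
            ring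
          · rw [if_neg hqm, if_neg hqm]
            simp
        rw [Finset.sum_congr rfl (fun k hk => hmain k (Finset.mem_range.1 hk))]
        rw [← Finset.sum_mul]
        rw [char_sum hb (c := (l:ℤ)) ?_, zero_mul]
        intro hdvd
        rw [Int.natCast_dvd_natCast] at hdvd
        have hl' : 1 ≤ l ∧ l < b := by
          rw [if_neg hjrne] at hl
          exact hl
        have := Nat.le_of_dvd (by omega) hdvd
        omega
      · -- W > jr, n = W
        have hnW : n = W := by omega
        set n' := n - 1 with hn'
        have hn'' : n = n' + 1 := by omega
        set D : ℕ := (α / b ^ n') % b with hD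
        have hDne : D ≠ 0 := by
          rw [hD, hn']
          have := top_digit_ne_zero hb (α := α) ?_
          · rw [← hW] at this
            rw [show n - 1 = W - 1 by omega]
            exact this
          · intro h0
            rw [h0] at hW
            rw [weight_one_zero] at hW
            omega
        have hDlt : D < b := Nat.mod_lt _ hb0
        have hsum_eq : ∀ k, k < b →
            (∑ a ∈ range n, (((α / b ^ a) % b : ℕ) : ℂ) *
              ((((b*q+k) / b^(n-(a+1))) % b : ℕ) : ℂ))
            = (∑ a ∈ range n', (((α / b ^ a) % b : ℕ) : ℂ) *
              (((q / b^(n'-(a+1))) % b : ℕ) : ℂ)) + (D:ℂ) * (k:ℂ) := by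
          intro k hk
          rw [hn'', Finset.sum_range_succ]
          congr 1
          · apply Finset.sum_congr rfl
            intro a ha
            rw [Finset.mem_range] at ha
            have he : 1 ≤ n' + 1 - (a+1) := by omega
            rw [mul_add_div_pow hb0 hk he,
              show n'+1-(a+1)-1 = n'-(a+1) by omega]
          · rw [show n'+1-(n'+1) = 0 by omega, pow_zero, Nat.div_one,
              Nat.mul_add_mod, Nat.mod_eq_of_lt hk, ← hD]
        have hhaar_eq : ∀ k, k < b →
            (if jr = 0 then (1:ℂ) else if (b*q+k) / b^(n-jr+1) = m then
              Complex.exp (2 * (Real.pi:ℂ) * Complex.I * (l:ℂ) *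
                ((((b*q+k) / b^(n-jr)) % b : ℕ) : ℂ) / (b:ℂ))
            else 0)
            = (if jr = 0 then (1:ℂ) else if q / b^(n-jr) = m then
              Complex.exp (2 * (Real.pi:ℂ) * Complex.I * (l:ℂ) *
                ((((q / b^(n-jr-1)) % b : ℕ) : ℂ)) / (b:ℂ))
            else 0) := by
          intro k hk
          rcases Nat.eq_zero_or_pos jr with hjr0 | hjrpos
          · simp [hjr0]
          · have hjrne : ¬ (jr = 0) := by omega
            rw [if_neg hjrne, if_neg hjrne]
            have hd1 : (b*q+k) / b^(n-jr+1) = q / b^(n-jr) := by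
              rw [mul_add_div_pow hb0 hk (by omega), show n-jr+1-1 = n-jr by omega]
            have hd2 : (b*q+k) / b^(n-jr) = q / b^(n-jr-1) := by
              rw [mul_add_div_pow hb0 hk (by omega)]
            rw [hd1, hd2]
        have hmain : ∀ k, k < b → c (b*q+k) =
            Complex.exp (2 * (Real.pi:ℂ) * Complex.I * (((-(D:ℤ)):ℤ):ℂ) / (b:ℂ))^k *
              ((if jr = 0 then (1:ℂ) else if q / b^(n-jr) = m then
                Complex.exp (2 * (Real.pi:ℂ) * Complex.I * (l:ℂ) *
                  ((((q / b^(n-jr-1)) % b : ℕ) : ℂ)) / (b:ℂ))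
              else 0) *
              (starRingEnd ℂ) (Complex.exp (2 * (Real.pi:ℂ) * Complex.I / (b:ℂ) *
                ∑ a ∈ range n', (((α / b ^ a) % b : ℕ) : ℂ) *
                  (((q / b^(n'-(a+1))) % b : ℕ) : ℂ)))) := by
          intro k hk
          rw [hc]
          simp only []
          rw [hsum_eq k hk, hhaar_eq k hk]
          rw [mul_add, Complex.exp_add, map_mul]
          have hconj : (starRingEnd ℂ) (Complex.exp (2 * (Real.pi:ℂ) * Complex.I / (b:ℂ) *
              ((D:ℂ) * (k:ℂ))))
              = Complex.exp (2 * (Real.pi:ℂ) * Complex.I * (((-(D:ℤ)):ℤ):ℂ) / (b:ℂ))^k := by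
            rw [← Complex.exp_nat_mul, ← Complex.exp_conj]
            congr 1
            simp only [map_mul, map_div₀, Complex.conj_I, Complex.conj_ofReal,
              map_ofNat, Complex.conj_natCast]
            push_cast
            ring
          rw [hconj]
          ring
        rw [Finset.sum_congr rfl (fun k hk => hmain k (Finset.mem_range.1 hk))]
        rw [← Finset.sum_mul]
        rw [char_sum hb (c := -(D:ℤ)) ?_, zero_mul]
        intro hdvd
        rw [Int.dvd_neg, Int.natCast_dvd_natCast] at hdvd
        have := Nat.le_of_dvd (by omega) hdvd
        omega
    rw [hzero, smul_zero]

end HWaux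

open DigitalNets in
/-- Lemma 5.5: `|⟨h_{j,m,l}, wal_α⟩| ≤ C b^{−|j|₊}`, and
`⟨h_{j,m,l}, wal_α⟩ = 0` if `ρ₁(α_i) ≠ j_i + 1` for some `i`. -/
theorem haar_walsh_inner (b d : ℕ) (hb : 2 ≤ b) (hd : 1 ≤ d) :
    ∃ C : ℝ, 0 < C ∧ ∀ (jr : Fin d → ℕ) (m : (i : Fin d) → Fin (b ^ (jr i - 1)))
      (l : Fin d → ℕ), validL b jr l → ∀ α : Fin d → ℕ,
      ‖innerCube d (haar b d (level jr) (fun i => (m i : ℕ)) l) (walsh b d α)‖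
          ≤ C * ((b : ℝ) ^ levelSum jr)⁻¹ ∧
      ((∃ i, weight b 1 (α i) ≠ jr i) →
        innerCube d (haar b d (level jr) (fun i => (m i : ℕ)) l) (walsh b d α) = 0) := by
  refine ⟨1, one_pos, ?_⟩
  intro jr m l hl α
  set F : Fin d → ℝ → ℂ := fun i y =>
    haar1 b ((jr i : ℤ)-1) (m i) (l i) y * (starRingEnd ℂ) (walsh1 b (α i) y) with hF
  have hmeas : MeasurableSet (unitCube d) :=
    MeasurableSet.univ_pi (fun i => measurableSet_Ico)
  have hkey : innerCube d (haar b d (level jr) (fun i => (m i : ℕ)) l) (walsh b d α)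
      = ∏ i, ∫ x in Set.Ico (0:ℝ) 1, F i x := by
    have h1 : ∀ x : Fin d → ℝ,
        haar b d (level jr) (fun i => (m i:ℕ)) l x * (starRingEnd ℂ) (walsh b d α x)
        = ∏ i, F i (x i) := by
      intro x
      rw [haar, walsh, map_prod, ← Finset.prod_mul_distrib]
      rfl
    have h2 : (Set.indicator (unitCube d) (fun x : Fin d → ℝ => ∏ i, F i (x i)))
        = fun x : Fin d → ℝ => ∏ i, Set.indicator (Set.Ico (0:ℝ) 1) (F i) (x i) := by
      funext x
      by_cases hx : x ∈ unitCube d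
      · rw [Set.indicator_of_mem hx]
        apply Finset.prod_congr rfl
        intro i _
        rw [Set.indicator_of_mem]
        exact (Set.mem_univ_pi.1 hx) i
      · rw [Set.indicator_of_notMem hx]
        symm
        rw [unitCube, Set.mem_univ_pi] at hx
        push_neg at hx
        obtain ⟨i, hi⟩ := hx
        exact Finset.prod_eq_zero (Finset.mem_univ i) (Set.indicator_of_notMem hi (F i))
    calc innerCube d (haar b d (level jr) (fun i => (m i : ℕ)) l) (walsh b d α)
        = ∫ x in unitCube d, ∏ i, F i (x i) := by
          rw [innerCube]
          apply MeasureTheory.setIntegral_congr_fun hmeas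
          intro x _
          exact h1 x
      _ = ∫ x : Fin d → ℝ, Set.indicator (unitCube d) (fun x => ∏ i, F i (x i)) x :=
          (MeasureTheory.integral_indicator hmeas).symm
      _ = ∫ x : Fin d → ℝ, ∏ i, Set.indicator (Set.Ico (0:ℝ) 1) (F i) (x i) := by
          rw [h2]
      _ = ∏ i, ∫ y : ℝ, Set.indicator (Set.Ico (0:ℝ) 1) (F i) y :=
          MeasureTheory.integral_fintype_prod_eq_prod
            (fun i y => Set.indicator (Set.Ico (0:ℝ) 1) (F i) y)
      _ = ∏ i, ∫ x in Set.Ico (0:ℝ) 1, F i x := by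
          apply Finset.prod_congr rfl
          intro i _
          exact MeasureTheory.integral_indicator measurableSet_Ico
  have hcore : ∀ i : Fin d,
      ‖∫ x in Set.Ico (0:ℝ) 1, F i x‖ ≤ ((b:ℝ)^(jr i - 1))⁻¹ ∧
      (weight b 1 (α i) ≠ jr i → ∫ x in Set.Ico (0:ℝ) 1, F i x = 0) := by
    intro i
    exact HWaux.core1d hb (jr i) (m i) (l i) (α i) (m i).isLt (hl i)
  constructor
  · rw [hkey, one_mul, norm_prod]
    have hbound : ∏ i, ‖∫ x in Set.Ico (0:ℝ) 1, F i x‖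
        ≤ ∏ i, ((b:ℝ)^(jr i - 1))⁻¹ := by
      apply Finset.prod_le_prod
      · intro i _
        exact norm_nonneg _
      · intro i _
        exact (hcore i).1
    refine le_trans hbound (le_of_eq ?_)
    rw [show (∏ i, ((b:ℝ)^(jr i - 1))⁻¹) = (∏ i, (b:ℝ)^(jr i - 1))⁻¹ from
      (Finset.prod_inv_distrib _)]
    congr 1
    rw [levelSum, ← Finset.prod_pow_eq_pow_sum]
  · rintro ⟨i, hi⟩
    rw [hkey]
    exact Finset.prod_eq_zero (Finset.mem_univ i) ((hcore i).2 hi)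
end
end

section
/- Let b be a prime, let n,d ≥ 1, 0 ≤ v ≤ n and s ≥ n be integers, and let C₁,…,C_d ∈ 𝔽_b^{s×n} generate an order 1 digital (v,n,d)-net over 𝔽_b. Let λ₁,…,λ_d ∈ ℕ₀ with λ_i ≤ s for all i, and let γ₁,…,γ_d ≥ 1 be integers. Let ω denote the number of t = (t₁,…,t_d) ∈ 𝒟(C₁,…,C_d) such that ρ₁(t_i) = γ_i for all 1 ≤ i ≤ d and, for each i, either γ_i ≤ λ_i or ρ₁(t_i′) = λ_i. Then ω ≤ (b−1)^d · b^{(min(λ₁,γ₁−1) + … + min(λ_d,γ_d−1) − n + v)₊}, where a₊ = max(a,0). -/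
open MeasureTheory Finset
open scoped BigOperators Classical

noncomputable section

section Aux

open DigitalNets

/-- digits reconstruct the mod. -/
private lemma digit_mod_pow_sum (b x : ℕ) :
    ∀ m, x % b ^ m = ∑ k ∈ Finset.range m, (x / b ^ k % b) * b ^ k := by
  intro m
  induction m with
  | zero => simp [Nat.mod_one]
  | succ m ih =>
    rw [Finset.sum_range_succ, ← ih]
    have h1 : x % b ^ (m+1) % b ^ m = x % b ^ m := by
      rw [Nat.mod_mod_of_dvd _ (pow_dvd_pow b (Nat.le_succ m))]
    have h2 : x % b ^ (m+1) / b ^ m = x / b ^ m % b := by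
      rw [pow_succ, Nat.mod_mul_right_div_self]
    have h3 := Nat.div_add_mod (x % b ^ (m+1)) (b ^ m)
    have h4 : b ^ m * (x % b ^ (m+1) / b ^ m) = (x / b ^ m % b) * b ^ m := by
      rw [h2, mul_comm]
    omega

private lemma weight_one_eq {b : ℕ} (hb : 2 ≤ b) {t : ℕ} (ht : t ≠ 0) :
    weight b 1 t = Nat.log b t + 1 := by
  set L := Nat.log b t with hL
  have hb1 : 1 < b := hb
  have hub : ∀ a ∈ digitPositions b t, a ≤ L + 1 := by
    intro a ha
    simp only [digitPositions, Finset.mem_filter, Finset.mem_range] at ha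
    obtain ⟨-, h1, h2⟩ := ha
    by_contra hc
    push_neg at hc
    have hpow : b ^ (L+1) ≤ b ^ (a-1) := Nat.pow_le_pow_right (by omega) (by omega)
    have hlt : t < b ^ (L+1) := Nat.lt_pow_succ_log_self hb1 t
    have : t / b ^ (a-1) = 0 := Nat.div_eq_of_lt (by omega)
    simp [this] at h2
  have hLmem : L + 1 ∈ digitPositions b t := by
    simp only [digitPositions, Finset.mem_filter, Finset.mem_range]
    have h1 : b ^ L ≤ t := Nat.pow_log_le_self b ht
    have h2 : t < b ^ (L+1) := Nat.lt_pow_succ_log_self hb1 t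
    have hbL : 0 < b ^ L := Nat.pow_pos (by omega)
    have hq1 : 1 ≤ t / b ^ L := (Nat.one_le_div_iff hbL).2 h1
    have hq2 : t / b ^ L < b := (Nat.div_lt_iff_lt_mul hbL).2 (by rw [← pow_succ']; exact h2)
    refine ⟨?_, by omega, ?_⟩
    · have := Nat.log_lt_self b ht
      omega
    · simpa [Nat.add_sub_cancel, Nat.mod_eq_of_lt hq2] using by omega
  rw [weight]
  rw [Finset.sum_eq_single (L + 1)]
  · have : ((digitPositions b t).filter fun a' => L + 1 < a').card = 0 := by
      rw [Finset.card_eq_zero, Finset.filter_eq_empty_iff]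
      intro a ha
      exact not_lt.2 (hub a ha)
    simp [this]
  · intro a ha hne
    have hmem : L + 1 ∈ (digitPositions b t).filter fun a' => a < a' := by
      refine Finset.mem_filter.2 ⟨hLmem, ?_⟩
      have := hub a ha
      omega
    have hcard : 1 ≤ ((digitPositions b t).filter fun a' => a < a').card :=
      Finset.card_pos.2 ⟨_, hmem⟩
    simp [Nat.not_lt.2 hcard]
  · intro h; exact absurd hLmem h

private lemma weight_one_zero (b : ℕ) : weight b 1 0 = 0 := by
  simp [weight, digitPositions]

private lemma sum_dite_fin {β : Type*} [AddCommMonoid β] {s m : ℕ} (hms : m ≤ s)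
    (f : Fin m → β) :
    (∑ k : Fin s, if h : (k : ℕ) < m then f ⟨(k : ℕ), h⟩ else 0) = ∑ k : Fin m, f k := by
  have h1 : (∑ k : Fin s, if h : (k : ℕ) < m then f ⟨(k : ℕ), h⟩ else 0)
      = ∑ j ∈ Finset.range s, (fun j => if h : j < m then f ⟨j, h⟩ else 0) j :=
    Fin.sum_univ_eq_sum_range (fun j => if h : j < m then f ⟨j, h⟩ else 0) s
  have h2 : (∑ k : Fin m, f k)
      = ∑ j ∈ Finset.range m, (fun j => if h : j < m then f ⟨j, h⟩ else 0) j := by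
    rw [← Fin.sum_univ_eq_sum_range (fun j => if h : j < m then f ⟨j, h⟩ else 0) m]
    apply Finset.sum_congr rfl
    intro k _
    simp
  rw [h1, h2]
  symm
  apply Finset.sum_subset (Finset.range_subset_range.2 hms)
  intro j _ hj
  rw [Finset.mem_range] at hj
  exact dif_neg (by omega)

private lemma sum_ite_eq_nat {β : Type*} [AddCommMonoid β] {s : ℕ} (g : ℕ) (f : Fin s → β) :
    (∑ k : Fin s, if (k : ℕ) = g then f k else 0) = if h : g < s then f ⟨g, h⟩ else 0 := by
  by_cases h : g < s
  · rw [dif_pos h, Finset.sum_eq_single (⟨g, h⟩ : Fin s)]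
    · simp
    · intro k _ hk
      rw [if_neg]
      intro hc
      exact hk (Fin.ext hc)
    · intro hc
      exact absurd (Finset.mem_univ _) hc
  · rw [dif_neg h]
    apply Finset.sum_eq_zero
    intro k _
    rw [if_neg]
    intro hc
    exact h (hc ▸ k.2)

/-- The linear map sending the low digits to the dual-net sum. -/
private noncomputable def Lmap {b n s d : ℕ} (Cm : Fin d → Matrix (Fin s) (Fin n) (ZMod b))
    (m : Fin d → ℕ) (hms : ∀ i, m i ≤ s) :
    ((i : Fin d) → Fin (m i) → ZMod b) →ₗ[ZMod b] (Fin n → ZMod b) where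
  toFun u := fun jc => ∑ i, ∑ k : Fin (m i),
    u i k * Cm i ⟨(k : ℕ), lt_of_lt_of_le k.2 (hms i)⟩ jc
  map_add' u v := by
    funext jc
    simp only [Pi.add_apply, add_mul, Finset.sum_add_distrib]
  map_smul' a u := by
    funext jc
    simp only [Pi.smul_apply, smul_eq_mul, RingHom.id_apply, Finset.mul_sum, mul_assoc]

private lemma inner_if_sum (e : ℕ) (F : Fin e → ℕ) (hF : ∀ k, F k = (k : ℕ)) :
    (∑ k : Fin e, if (k : ℕ) < 1 then F k + 1 else 0) = if e = 0 then 0 else 1 := by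
  cases e with
  | zero => simp
  | succ e =>
    rw [Fin.sum_univ_succ]
    have h0 : ((0 : Fin (e+1)) : ℕ) = 0 := rfl
    simp only [hF]
    simp

private lemma fiber_card_le {b : ℕ} [Fact (Nat.Prime b)] {V : Type*} [AddCommGroup V]
    [Module (ZMod b) V] [Fintype V] [Module.Finite (ZMod b) V]
    {W : Type*} [AddCommGroup W] [Module (ZMod b) W]
    (L : V →ₗ[ZMod b] W) (c : W) (r : ℕ)
    (hr : r ≤ Module.finrank (ZMod b) (LinearMap.range L)) :
    (Finset.univ.filter fun u : V => L u = c).card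
      ≤ b ^ (Module.finrank (ZMod b) V - r) := by
  by_cases hne : (Finset.univ.filter fun u : V => L u = c).Nonempty
  · obtain ⟨u₀, hu₀⟩ := hne
    have hu₀' : L u₀ = c := (Finset.mem_filter.1 hu₀).2
    have h1 : (Finset.univ.filter fun u : V => L u = c).card
        ≤ (Finset.univ.filter fun w : V => L w = 0).card := by
      apply Finset.card_le_card_of_injOn (fun u => u - u₀)
      · intro u hu
        simp only [Finset.mem_coe, Finset.mem_filter, Finset.mem_univ, true_and] at hu ⊢
        simp [hu, hu₀']
      · intro u _ u' _ h
        exact sub_left_injective h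
    have h2 : (Finset.univ.filter fun w : V => L w = 0).card
        = Fintype.card (LinearMap.ker L) := by
      rw [Fintype.card_subtype]
      simp [LinearMap.mem_ker]
    have h3 : Fintype.card (LinearMap.ker L)
        = b ^ Module.finrank (ZMod b) (LinearMap.ker L) := by
      rw [Module.card_eq_pow_finrank (K := ZMod b), ZMod.card]
    have h4 := LinearMap.finrank_range_add_finrank_ker L
    have hb1 : 1 ≤ b := (Fact.out : Nat.Prime b).one_le
    have h5 : Module.finrank (ZMod b) (LinearMap.ker L)
        ≤ Module.finrank (ZMod b) V - r := by omega
    calc (Finset.univ.filter fun u : V => L u = c).card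
        ≤ b ^ Module.finrank (ZMod b) (LinearMap.ker L) := by rw [← h3, ← h2]; exact h1
      _ ≤ b ^ (Module.finrank (ZMod b) V - r) := Nat.pow_le_pow_right hb1 h5
  · rw [Finset.not_nonempty_iff_eq_empty] at hne
    simp [hne]

private lemma rank_ge {b n s d v : ℕ} (hb : Nat.Prime b)
    (Cm : Fin d → Matrix (Fin s) (Fin n) (ZMod b))
    (hnet : IsOrderDigitalNet b 1 n d s v Cm)
    (m : Fin d → ℕ) (hms : ∀ i, m i ≤ s) :
    min (∑ i, m i) (n - v) ≤ Module.finrank (ZMod b) (LinearMap.range (Lmap Cm m hms)) := by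
  haveI : Fact (Nat.Prime b) := ⟨hb⟩
  set r := min (∑ i, m i) (n - v) with hrdef
  set m' : ℕ → ℕ := fun j => if h : j < d then m ⟨j, h⟩ else 0 with hm'
  set P : ℕ → ℕ := fun j => min r (∑ k ∈ Finset.range j, m' k) with hP
  have hPmono : Monotone P := by
    intro a c hac
    exact min_le_min le_rfl (Finset.sum_le_sum_of_subset (Finset.range_subset_range.2 hac))
  set η : Fin d → ℕ := fun i => P ((i : ℕ) + 1) - P (i : ℕ) with hη
  have hsum_m : ∑ k ∈ Finset.range d, m' k = ∑ i, m i := by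
    rw [← Fin.sum_univ_eq_sum_range m' d]
    apply Finset.sum_congr rfl
    intro i _
    simp [hm', i.2]
  have hηsum : ∑ i, η i = r := by
    rw [hη, Fin.sum_univ_eq_sum_range (fun j => P (j + 1) - P j) d,
      Finset.sum_range_tsub hPmono]
    have h1 : P d = r := by
      rw [hP]
      simp only [hsum_m]
      exact min_eq_left (min_le_left _ _)
    have h2 : P 0 = 0 := by simp [hP]
    omega
  have hηle : ∀ i, η i ≤ m i := by
    intro i
    have h1 : ∑ k ∈ Finset.range ((i : ℕ) + 1), m' k
        = ∑ k ∈ Finset.range (i : ℕ), m' k + m' (i : ℕ) := Finset.sum_range_succ _ _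
    have h2 : m' (i : ℕ) = m i := by simp [hm', i.2]
    simp only [hη, hP, h1, h2]
    omega
  set lamF : (i : Fin d) → Fin (η i) → Fin s :=
    fun i k => ⟨(k : ℕ), lt_of_lt_of_le k.2 ((hηle i).trans (hms i))⟩ with hlamF
  have hmono : ∀ i, StrictMono (lamF i) := by
    intro i a c h
    exact h
  have hsc : (∑ i, ∑ k : Fin (η i), if (k : ℕ) < 1 then (lamF i k : ℕ) + 1 else 0)
      ≤ 1 * n - v := by
    have h1 : ∀ i, (∑ k : Fin (η i), if (k : ℕ) < 1 then (lamF i k : ℕ) + 1 else 0)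
        = if η i = 0 then 0 else 1 := by
      intro i
      exact inner_if_sum (η i) _ (fun k => rfl)
    rw [Finset.sum_congr rfl (fun i _ => h1 i)]
    have h2 : (∑ i, if η i = 0 then 0 else 1) ≤ ∑ i, η i := by
      apply Finset.sum_le_sum
      intro i _
      by_cases h : η i = 0 <;> simp [h] <;> omega
    rw [hηsum] at h2
    have : r ≤ n - v := min_le_right _ _
    omega
  have hli := hnet η lamF hmono hsc
  have hmem : ∀ p : (i : Fin d) × Fin (η i),
      (fun jc : Fin n => Cm p.1 (lamF p.1 p.2) jc) ∈ LinearMap.range (Lmap Cm m hms) := by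
    intro p
    refine ⟨(fun i' k' => if i' = p.1 ∧ (k' : ℕ) = ((p.2 : Fin (η p.1)) : ℕ) then 1 else 0), ?_⟩
    funext jc
    show (∑ i, ∑ k : Fin (m i), _) = _
    rw [Finset.sum_eq_single p.1]
    · have hlt : ((p.2 : Fin (η p.1)) : ℕ) < m p.1 := lt_of_lt_of_le p.2.2 (hηle p.1)
      rw [Finset.sum_eq_single (⟨((p.2 : Fin (η p.1)) : ℕ), hlt⟩ : Fin (m p.1))]
      · simp [hlamF]
      · intro k _ hk
        have hne : ¬(p.1 = p.1 ∧ (k : ℕ) = ((p.2 : Fin (η p.1)) : ℕ)) := by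
          rintro ⟨-, hc⟩
          exact hk (Fin.ext hc)
        simp [hne]
        intro hc
        exact absurd (Fin.ext hc) hk
      · intro hc
        exact absurd (Finset.mem_univ _) hc
    · intro i _ hi
      apply Finset.sum_eq_zero
      intro k _
      simp [hi]
    · intro hc
      exact absurd (Finset.mem_univ _) hc
  set ψ : ((i : Fin d) × Fin (η i)) → LinearMap.range (Lmap Cm m hms) :=
    fun p => ⟨_, hmem p⟩ with hψ
  have hliψ : LinearIndependent (ZMod b) ψ := by
    apply LinearIndependent.of_comp (LinearMap.range (Lmap Cm m hms)).subtype
    exact hli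
  have hcard := hliψ.fintype_card_le_finrank
  rw [Fintype.card_sigma] at hcard
  simp only [Fintype.card_fin] at hcard
  rw [hηsum] at hcard
  exact hcard

private lemma digit_zero_mid {b t g k mi : ℕ} (hb : 1 ≤ b) (hu : t % b ^ g < b ^ mi)
    (hmk : mi ≤ k) (hkg : k < g) : t / b ^ k % b = 0 := by
  have hbk : 0 < b ^ k := Nat.pow_pos hb
  have h1 : t % b ^ g + t / b ^ g * b ^ g = t := Nat.mod_add_div' t (b ^ g)
  have h2 : b ^ g = b ^ (g - k) * b ^ k := by rw [← pow_add]; congr 1; omega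
  have h3 : t / b ^ k = t % b ^ g / b ^ k + t / b ^ g * b ^ (g - k) := by
    calc t / b ^ k = (t % b ^ g + t / b ^ g * (b ^ (g - k) * b ^ k)) / b ^ k := by
          rw [← h2, h1]
      _ = _ := by rw [← mul_assoc, Nat.add_mul_div_right _ _ hbk]
  have h4 : t % b ^ g / b ^ k = 0 :=
    Nat.div_eq_of_lt (lt_of_lt_of_le hu (Nat.pow_le_pow_right hb hmk))
  have h5 : b ^ (g - k) = b ^ (g - k - 1) * b := by
    rw [← pow_succ]; congr 1; omega
  rw [h3, h4, zero_add, h5, ← mul_assoc, Nat.mul_mod_left]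

end Aux

open DigitalNets in
/-- Lemma 5.7: counting dual-net vectors: the number `ω` of
`t ∈ 𝒟(C₁,…,C_d)` with `ρ₁(t_i) = γ_i` and (`γ_i ≤ λ_i` or `ρ₁(t_i′) = λ_i`) for all `i`
satisfies `ω ≤ (b−1)^d b^{(Σᵢ min(λᵢ,γᵢ−1) − n + v)₊}`. -/
theorem dual_count_le (b n d s v : ℕ) (hb : b.Prime) (hn : 1 ≤ n) (hd : 1 ≤ d)
    (hv : v ≤ n) (hs : n ≤ s) (Cm : Fin d → Matrix (Fin s) (Fin n) (ZMod b))
    (hnet : IsOrderDigitalNet b 1 n d s v Cm)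
    (lam γ : Fin d → ℕ) (hlam : ∀ i, lam i ≤ s) (hγ : ∀ i, 1 ≤ γ i) :
    ((Fintype.piFinset fun i : Fin d => Finset.range (b ^ γ i)).filter fun t =>
        InDual Cm t ∧ ∀ i, weight b 1 (t i) = γ i ∧
          (γ i ≤ lam i ∨ weight b 1 (trunc b (t i)) = lam i)).card
      ≤ (b - 1) ^ d * b ^ (∑ i, min (lam i) (γ i - 1) + v - n) := by
  classical
  haveI : Fact (Nat.Prime b) := ⟨hb⟩
  have hb2 : 2 ≤ b := hb.two_le
  set m : Fin d → ℕ := fun i => min (lam i) (γ i - 1) with hmdef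
  have hms : ∀ i, m i ≤ s := fun i => le_trans (min_le_left _ _) (hlam i)
  have hmg : ∀ i, m i ≤ γ i - 1 := fun i => min_le_right _ _
  set M := ∑ i, m i with hMdef
  set r := min M (n - v) with hrdef
  -- basic facts about members of the counted set
  have hfacts : ∀ t : Fin d → ℕ, (∀ i, t i < b ^ γ i) →
      (∀ i, weight b 1 (t i) = γ i ∧
        (γ i ≤ lam i ∨ weight b 1 (trunc b (t i)) = lam i)) →
      ∀ i : Fin d, b ^ (γ i - 1) ≤ t i ∧ t i % b ^ (γ i - 1) < b ^ m i ∧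
        1 ≤ t i / b ^ (γ i - 1) ∧ t i / b ^ (γ i - 1) < b := by
    intro t hmemt hpropt i
    have hlt : t i < b ^ γ i := hmemt i
    obtain ⟨hw, hcase⟩ := hpropt i
    have htne : t i ≠ 0 := by
      intro h0
      rw [h0, weight_one_zero] at hw
      have := hγ i
      omega
    have hweq := weight_one_eq hb2 htne
    have hlog : Nat.log b (t i) = γ i - 1 := by
      rw [hweq] at hw
      have := hγ i
      omega
    have hge : b ^ (γ i - 1) ≤ t i := by
      rw [← hlog]; exact Nat.pow_log_le_self b htne
    have hbg : 0 < b ^ (γ i - 1) := Nat.pow_pos (by omega)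
    have hγg : γ i = (γ i - 1) + 1 := by have := hγ i; omega
    have hq1 : 1 ≤ t i / b ^ (γ i - 1) := (Nat.one_le_div_iff hbg).2 hge
    have hq2 : t i / b ^ (γ i - 1) < b := by
      apply (Nat.div_lt_iff_lt_mul hbg).2
      rw [← pow_succ', ← hγg]
      exact hlt
    have hu : t i % b ^ (γ i - 1) < b ^ m i := by
      rcases hcase with hc | hc
      · have hmi : m i = γ i - 1 := min_eq_right (by omega)
        rw [hmi]
        exact Nat.mod_lt _ hbg
      · have htr : trunc b (t i) = t i % b ^ (γ i - 1) := by
          rw [trunc, hw]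
        rw [htr] at hc
        by_cases h0 : t i % b ^ (γ i - 1) = 0
        · rw [h0]
          exact Nat.pow_pos (by omega)
        · have hl2 := weight_one_eq hb2 h0
          rw [hc] at hl2
          have hlt2 : t i % b ^ (γ i - 1) < b ^ lam i := by
            have h3 := Nat.lt_pow_succ_log_self (by omega : 1 < b) (t i % b ^ (γ i - 1))
            rwa [Nat.succ_eq_add_one, ← hl2] at h3
          have hltg : t i % b ^ (γ i - 1) < b ^ (γ i - 1) := Nat.mod_lt _ hbg
          rcases min_cases (lam i) (γ i - 1) with ⟨he, -⟩ | ⟨he, -⟩ <;>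
            rw [hmdef] <;> simp only [] <;> rw [he]
          · exact hlt2
          · exact hltg
    exact ⟨hge, hu, hq1, hq2⟩
  -- split the count according to the leading digits
  set T := Fintype.piFinset fun _ : Fin d => Finset.Ioo 0 b with hT
  have hmaps : ∀ t ∈ (Fintype.piFinset fun i : Fin d => Finset.range (b ^ γ i)).filter
      (fun t => InDual Cm t ∧ ∀ i, weight b 1 (t i) = γ i ∧
        (γ i ≤ lam i ∨ weight b 1 (trunc b (t i)) = lam i)),
      (fun i => t i / b ^ (γ i - 1)) ∈ T := by
    intro t ht
    rw [Finset.mem_filter, Fintype.mem_piFinset] at ht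
    obtain ⟨hmem, -, hprop⟩ := ht
    have hf := hfacts t (fun i => Finset.mem_range.1 (hmem i)) hprop
    rw [hT, Fintype.mem_piFinset]
    intro i
    rw [Finset.mem_Ioo]
    obtain ⟨-, -, hq1, hq2⟩ := hf i
    omega
  rw [Finset.card_eq_sum_card_fiberwise hmaps]
  -- bound each fiber
  have hrank := rank_ge hb Cm hnet m hms
  have hVrank : Module.finrank (ZMod b) ((i : Fin d) → Fin (m i) → ZMod b) = M := by
    rw [Module.finrank_pi_fintype]
    simp [Module.finrank_pi]
    rfl
  have hfiber : ∀ τ ∈ T,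
      (((Fintype.piFinset fun i : Fin d => Finset.range (b ^ γ i)).filter
        (fun t => InDual Cm t ∧ ∀ i, weight b 1 (t i) = γ i ∧
          (γ i ≤ lam i ∨ weight b 1 (trunc b (t i)) = lam i))).filter
        (fun t => (fun i => t i / b ^ (γ i - 1)) = τ)).card ≤ b ^ (M - r) := by
    intro τ hτ
    set c : Fin n → ZMod b := fun jc =>
      - ∑ i, if h : γ i - 1 < s then ((τ i : ℕ) : ZMod b) * Cm i ⟨γ i - 1, h⟩ jc else 0
      with hcdef
    have step : (((Fintype.piFinset fun i : Fin d => Finset.range (b ^ γ i)).filter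
        (fun t => InDual Cm t ∧ ∀ i, weight b 1 (t i) = γ i ∧
          (γ i ≤ lam i ∨ weight b 1 (trunc b (t i)) = lam i))).filter
        (fun t => (fun i => t i / b ^ (γ i - 1)) = τ)).card
        ≤ (Finset.univ.filter fun u : (i : Fin d) → Fin (m i) → ZMod b =>
            Lmap Cm m hms u = c).card := by
      apply Finset.card_le_card_of_injOn
        (fun t => fun i (k : Fin (m i)) => ((t i / b ^ (k : ℕ) % b : ℕ) : ZMod b))
      · -- maps to the solution set
        intro t ht
        rw [Finset.mem_coe, Finset.mem_filter] at ht
        obtain ⟨htS, hτt⟩ := ht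
        rw [Finset.mem_filter, Fintype.mem_piFinset] at htS
        obtain ⟨hmem, hdual, hprop⟩ := htS
        have hf := hfacts t (fun i => Finset.mem_range.1 (hmem i)) hprop
        rw [Finset.mem_coe, Finset.mem_filter]
        refine ⟨Finset.mem_univ _, ?_⟩
        funext jc
        have hdual' : (∑ i, Matrix.mulVec (Matrix.transpose (Cm i))
            (dualDigitVec b s (t i))) = 0 := hdual
        have h0 := congrFun hdual' jc
        rw [Finset.sum_apply, Pi.zero_apply] at h0
        have hpt : ∀ i : Fin d,
            Matrix.mulVec (Matrix.transpose (Cm i)) (dualDigitVec b s (t i)) jc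
            = (∑ k : Fin (m i), ((t i / b ^ (k : ℕ) % b : ℕ) : ZMod b)
                * Cm i ⟨(k : ℕ), lt_of_lt_of_le k.2 (hms i)⟩ jc)
              + (if h : γ i - 1 < s then ((τ i : ℕ) : ZMod b) * Cm i ⟨γ i - 1, h⟩ jc
                else 0) := by
          intro i
          obtain ⟨hge, hu, hq1, hq2⟩ := hf i
          have hsplit : ∀ k : Fin s,
              Matrix.transpose (Cm i) jc k * dualDigitVec b s (t i) k
              = (if h : (k : ℕ) < m i then ((t i / b ^ (k : ℕ) % b : ℕ) : ZMod b)
                  * Cm i ⟨(k : ℕ), lt_of_lt_of_le h (hms i)⟩ jc else 0)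
                + (if (k : ℕ) = γ i - 1 then ((τ i : ℕ) : ZMod b) * Cm i k jc else 0) := by
            intro k
            rw [Matrix.transpose_apply]
            have hdd : dualDigitVec b s (t i) k = ((t i / b ^ (k : ℕ) % b : ℕ) : ZMod b) := rfl
            rw [hdd]
            by_cases h1 : (k : ℕ) < m i
            · rw [dif_pos h1, if_neg (by have := hmg i; omega : ¬((k : ℕ) = γ i - 1)),
                add_zero, mul_comm]
            · rw [dif_neg h1]
              by_cases h2 : (k : ℕ) = γ i - 1
              · rw [if_pos h2, zero_add, mul_comm]
                congr 1
                have hdig : t i / b ^ (k : ℕ) % b = τ i := by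
                  rw [h2, Nat.mod_eq_of_lt hq2]
                  exact congrFun hτt i
                rw [hdig]
              · rw [if_neg h2, add_zero]
                have hdig0 : t i / b ^ (k : ℕ) % b = 0 := by
                  rcases Nat.lt_or_ge (k : ℕ) (γ i - 1) with hk | hk
                  · exact digit_zero_mid (by omega) hu (by omega) hk
                  · have hγg : γ i ≤ (k : ℕ) := by have := hγ i; omega
                    have : t i < b ^ (k : ℕ) :=
                      lt_of_lt_of_le (Finset.mem_range.1 (hmem i))
                        (Nat.pow_le_pow_right (by omega) hγg)
                    simp [Nat.div_eq_of_lt this]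
                rw [hdig0]
                simp
          have hmv : Matrix.mulVec (Matrix.transpose (Cm i)) (dualDigitVec b s (t i)) jc
              = ∑ k : Fin s, Matrix.transpose (Cm i) jc k * dualDigitVec b s (t i) k := rfl
          rw [hmv, Finset.sum_congr rfl (fun k _ => hsplit k), Finset.sum_add_distrib]
          congr 1
          · exact sum_dite_fin (hms i)
              (fun k : Fin (m i) => ((t i / b ^ (k : ℕ) % b : ℕ) : ZMod b)
                * Cm i ⟨(k : ℕ), lt_of_lt_of_le k.2 (hms i)⟩ jc)
          · exact sum_ite_eq_nat (γ i - 1)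
              (fun k : Fin s => ((τ i : ℕ) : ZMod b) * Cm i k jc)
        rw [Finset.sum_congr rfl (fun i _ => hpt i), Finset.sum_add_distrib] at h0
        have hL : Lmap Cm m hms (fun i (k : Fin (m i)) =>
            ((t i / b ^ (k : ℕ) % b : ℕ) : ZMod b)) jc
            = ∑ i, ∑ k : Fin (m i), ((t i / b ^ (k : ℕ) % b : ℕ) : ZMod b)
                * Cm i ⟨(k : ℕ), lt_of_lt_of_le k.2 (hms i)⟩ jc := rfl
        rw [hL, hcdef]
        have := h0
        linear_combination this
      · -- injectivity
        intro t1 h1 t2 h2 heq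
        rw [Finset.mem_coe, Finset.mem_filter] at h1 h2
        obtain ⟨h1S, hτ1⟩ := h1
        obtain ⟨h2S, hτ2⟩ := h2
        rw [Finset.mem_filter, Fintype.mem_piFinset] at h1S h2S
        have hf1 := hfacts t1 (fun i => Finset.mem_range.1 (h1S.1 i)) h1S.2.2
        have hf2 := hfacts t2 (fun i => Finset.mem_range.1 (h2S.1 i)) h2S.2.2
        funext i
        have hdig : ∀ k, k < m i → t1 i / b ^ k % b = t2 i / b ^ k % b := by
          intro k hk
          have he := congrFun (congrFun heq i) (⟨k, hk⟩ : Fin (m i))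
          have hb1 : t1 i / b ^ k % b < b := Nat.mod_lt _ (by omega)
          have hb2' : t2 i / b ^ k % b < b := Nat.mod_lt _ (by omega)
          have := congrArg ZMod.val he
          rwa [ZMod.val_cast_of_lt hb1, ZMod.val_cast_of_lt hb2'] at this
        have hmod : t1 i % b ^ m i = t2 i % b ^ m i := by
          rw [digit_mod_pow_sum b (t1 i) (m i), digit_mod_pow_sum b (t2 i) (m i)]
          apply Finset.sum_congr rfl
          intro k hk
          rw [hdig k (Finset.mem_range.1 hk)]
        have hq : t1 i / b ^ (γ i - 1) = t2 i / b ^ (γ i - 1) := by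
          rw [congrFun hτ1 i, congrFun hτ2 i]
        have hmm : ∀ t : Fin d → ℕ, t i % b ^ (γ i - 1) < b ^ m i →
            t i % b ^ (γ i - 1) = t i % b ^ m i := by
          intro t hu
          conv_rhs => rw [← Nat.mod_mod_of_dvd (t i) (pow_dvd_pow b (hmg i))]
          exact (Nat.mod_eq_of_lt hu).symm
        have hm1 : t1 i % b ^ (γ i - 1) = t1 i % b ^ m i := hmm t1 (hf1 i).2.1
        have hm2 : t2 i % b ^ (γ i - 1) = t2 i % b ^ m i := hmm t2 (hf2 i).2.1
        have hd1 := Nat.mod_add_div' (t1 i) (b ^ (γ i - 1))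
        have hd2 := Nat.mod_add_div' (t2 i) (b ^ (γ i - 1))
        have hq' : t1 i / b ^ (γ i - 1) * b ^ (γ i - 1)
            = t2 i / b ^ (γ i - 1) * b ^ (γ i - 1) := by rw [hq]
        omega
    refine le_trans step ?_
    have hfc := fiber_card_le (Lmap Cm m hms) c r (le_trans (by rw [hrdef, hMdef]) hrank)
    rw [hVrank] at hfc
    convert hfc using 2
    all_goals (ext u; simp)
  calc ∑ τ ∈ T, (((Fintype.piFinset fun i : Fin d => Finset.range (b ^ γ i)).filter
        (fun t => InDual Cm t ∧ ∀ i, weight b 1 (t i) = γ i ∧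
          (γ i ≤ lam i ∨ weight b 1 (trunc b (t i)) = lam i))).filter
        (fun t => (fun i => t i / b ^ (γ i - 1)) = τ)).card
      ≤ ∑ _τ ∈ T, b ^ (M - r) := Finset.sum_le_sum hfiber
    _ = T.card * b ^ (M - r) := by rw [Finset.sum_const, smul_eq_mul]
    _ = (b - 1) ^ d * b ^ (M - r) := by
        rw [hT, Fintype.card_piFinset]
        simp [Nat.card_Ioo]
    _ = (b - 1) ^ d * b ^ (M + v - n) := by
        have hexp : M - r = M + v - n := by
          rcases le_total M (n - v) with h | h
          · have : r = M := by rw [hrdef]; exact min_eq_left h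
            omega
          · have : r = n - v := by rw [hrdef]; exact min_eq_right h
            omega
        rw [hexp]
end
end
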